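/- arXiv:2201.00533 — 6 statements merged into one kernel-verified Lean document; each statement's English description precedes it below -/
import Mathlib

section
/- Let G = (V, E) be a finite simple graph with a distinguished vertex v₀ ∈ V, and let λ : E → ℂ be any labeling. For a realization ρ of G write (x_v, y_v) = ρ(v) − ρ(v₀) for v ∈ V. Then the map sending ρ to the pair of functions (p, q), where p_v = x_v + i·y_v and q_v = x_v − i·y_v, induces a bijection between the set of equivalence classes (under direct isometries of ℂ²) of realizations of G compatible with λ and the set of orbits, under the ℂ*-action α · (p, q) = (α·p, α⁻¹·q), of the solution set {(p, q) : V → ℂ × ℂ | p_{v₀} = q_{v₀} = 0 and (p_u − p_v)·(q_u − q_v) = λ(e) for every edge e = {u, v} ∈ E}. In particular, the number of equivalence classes of compatible realizations equals the number of such orbits. -/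
open SimpleGraph

/-- A finite simple graph is a Laman graph if `|E| = 2|V| - 3` and every subgraph
`(V', E')` with `|V'| ≥ 2` satisfies `|E'| ≤ 2|V'| - 3`. -/
def IsLaman {V : Type*} [Finite V] (G : SimpleGraph V) : Prop :=
  (G.edgeSet.ncard : ℤ) = 2 * (Nat.card V : ℤ) - 3 ∧
  ∀ H : G.Subgraph, 2 ≤ H.verts.ncard →
    (H.edgeSet.ncard : ℤ) ≤ 2 * (H.verts.ncard : ℤ) - 3

/-- A realization `ρ : V → ℂ²` is compatible with a labeling `lam : E → ℂ` if for every
edge `{u,v}` one has `(ρ(u)₁ - ρ(v)₁)² + (ρ(u)₂ - ρ(v)₂)² = lam {u,v}`. -/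
def Compatible {V : Type*} (G : SimpleGraph V) (lam : G.edgeSet → ℂ)
    (ρ : V → Fin 2 → ℂ) : Prop :=
  ∀ u v (h : G.Adj u v),
    (ρ u 0 - ρ v 0) ^ 2 + (ρ u 1 - ρ v 1) ^ 2 =
      lam ⟨s(u, v), (SimpleGraph.mem_edgeSet G).mpr h⟩

/-- Two realizations are equivalent if they differ by a direct isometry of `ℂ²`:
`ρ'(v) = A·ρ(v) + b` with `AᵀA = 1` and `det A = 1`. -/
def EquivRealization {V : Type*} (ρ ρ' : V → Fin 2 → ℂ) : Prop :=
  ∃ (A : Matrix (Fin 2) (Fin 2) ℂ) (b : Fin 2 → ℂ),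
    A.transpose * A = 1 ∧ A.det = 1 ∧ ∀ v, ρ' v = A.mulVec (ρ v) + b

/-- The type of equivalence classes of realizations of `G` compatible with `lam`. -/
def RealizationClasses {V : Type*} (G : SimpleGraph V) (lam : G.edgeSet → ℂ) : Type _ :=
  Quot (fun ρ ρ' : { ρ : V → Fin 2 → ℂ // Compatible G lam ρ } => EquivRealization ρ.1 ρ'.1)

/-- `(G, lam)` is realizable if there exists a compatible realization. -/
def Realizable {V : Type*} (G : SimpleGraph V) (lam : G.edgeSet → ℂ) : Prop :=
  ∃ ρ, Compatible G lam ρ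

/-- `(G, lam)` is rigid if it is realizable and has only finitely many compatible
realizations up to equivalence. -/
def RigidLabeled {V : Type*} (G : SimpleGraph V) (lam : G.edgeSet → ℂ) : Prop :=
  Realizable G lam ∧ Finite (RealizationClasses G lam)

/-- `G` is generically rigid if `(G, lam)` is rigid for all `lam` in a dense open
subset of `ℂ^E`. -/
def GenericallyRigid {V : Type*} [Finite V] (G : SimpleGraph V) : Prop :=
  ∃ U : Set (G.edgeSet → ℂ), IsOpen U ∧ Dense U ∧ ∀ lam ∈ U, RigidLabeled G lam

/-- `G` has Laman number `N` if there is a dense open set of labelings `lam` for which the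
number of equivalence classes of compatible realizations equals `N`. -/
def HasLamanNumber {V : Type*} [Finite V] (G : SimpleGraph V) (N : ℕ) : Prop :=
  ∃ U : Set (G.edgeSet → ℂ), IsOpen U ∧ Dense U ∧
    ∀ lam ∈ U, Nat.card (RealizationClasses G lam) = N

/-- The map sending a realization `ρ` to the pair of functions `(p, q)` with
`p v = x_v + i y_v` and `q v = x_v - i y_v`, where `(x_v, y_v) = ρ v - ρ v₀`. -/
def toPQ {V : Type*} (v₀ : V) (ρ : V → Fin 2 → ℂ) : V → ℂ × ℂ := fun v =>
  ((ρ v 0 - ρ v₀ 0) + Complex.I * (ρ v 1 - ρ v₀ 1),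
   (ρ v 0 - ρ v₀ 0) - Complex.I * (ρ v 1 - ρ v₀ 1))

/-- `(p, q)` belongs to the solution set: `p v₀ = q v₀ = 0` and
`(p u - p v) (q u - q v) = lam e` for every edge `e = {u, v}`. -/
def IsPQSolution {V : Type*} (G : SimpleGraph V) (v₀ : V) (lam : G.edgeSet → ℂ)
    (pq : V → ℂ × ℂ) : Prop :=
  pq v₀ = (0, 0) ∧
  ∀ u v (h : G.Adj u v),
    ((pq u).1 - (pq v).1) * ((pq u).2 - (pq v).2) =
      lam ⟨s(u, v), (SimpleGraph.mem_edgeSet G).mpr h⟩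

/-- The `ℂ*`-action relation: `α • (p, q) = (α p, α⁻¹ q)`. -/
def PQOrbitRel {V : Type*} (pq pq' : V → ℂ × ℂ) : Prop :=
  ∃ α : ℂˣ, ∀ v, pq' v = ((α : ℂ) * (pq v).1, (α : ℂ)⁻¹ * (pq v).2)

/-- The set of orbits of the solution set under the `ℂ*`-action. -/
def PQOrbits {V : Type*} (G : SimpleGraph V) (v₀ : V) (lam : G.edgeSet → ℂ) : Type _ :=
  Quot (fun s s' : { pq : V → ℂ × ℂ // IsPQSolution G v₀ lam pq } => PQOrbitRel s.1 s'.1)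

noncomputable section PQAux

def fromPQ' {V : Type*} (pq : V → ℂ × ℂ) : V → Fin 2 → ℂ := fun v =>
  ![((pq v).1 + (pq v).2) / 2, ((pq v).1 - (pq v).2) / (2 * Complex.I)]

lemma pq_prod_identity (P Q : ℂ) :
    ((P + Q) / 2) ^ 2 + ((P - Q) / (2 * Complex.I)) ^ 2 = P * Q := by
  have h := Complex.I_ne_zero
  field_simp
  linear_combination (P - Q) ^ 2 * Complex.I_sq

-- entries of a rotation matrix
lemma rot_entries (A : Matrix (Fin 2) (Fin 2) ℂ) (hA : A.transpose * A = 1)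
    (hdet : A.det = 1) :
    A 1 1 = A 0 0 ∧ A 0 1 = -(A 1 0) ∧ (A 0 0) ^ 2 + (A 1 0) ^ 2 = 1 := by
  have h00 := congrFun (congrFun hA 0) 0
  have h01 := congrFun (congrFun hA 0) 1
  simp [Matrix.mul_apply, Fin.sum_univ_two, Matrix.one_apply] at h00 h01
  rw [Matrix.det_fin_two] at hdet
  set a := A 0 0; set b := A 1 0; set c := A 0 1; set d := A 1 1
  have h1 : a ^ 2 + b ^ 2 = 1 := by linear_combination h00
  have hda : d = a := by linear_combination a * hdet + b * h01 - d * h1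
  have hcb : c = -b := by linear_combination a * h01 - b * hdet - c * h1
  exact ⟨hda, hcb, h1⟩

end PQAux

section Rel
variable {V : Type*}

lemma toPQ_sol (G : SimpleGraph V) (v₀ : V) (lam : G.edgeSet → ℂ)
    (ρ : V → Fin 2 → ℂ) (h : Compatible G lam ρ) :
    IsPQSolution G v₀ lam (toPQ v₀ ρ) := by
  constructor
  · simp [toPQ]
  · intro u v hadj
    have hc := h u v hadj
    simp only [toPQ]
    linear_combination hc - (ρ u 1 - ρ v 1) ^ 2 * Complex.I_sq

lemma fromPQ'_compat (G : SimpleGraph V) (v₀ : V) (lam : G.edgeSet → ℂ)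
    (pq : V → ℂ × ℂ) (h : IsPQSolution G v₀ lam pq) :
    Compatible G lam (fromPQ' pq) := by
  intro u v hadj
  have hc := h.2 u v hadj
  have e0 : ∀ w, fromPQ' pq w 0 = ((pq w).1 + (pq w).2) / 2 := fun w => rfl
  have e1 : ∀ w, fromPQ' pq w 1 = ((pq w).1 - (pq w).2) / (2 * Complex.I) := fun w => rfl
  rw [e0, e0, e1, e1, ← hc, div_sub_div_same, div_sub_div_same]
  have := pq_prod_identity ((pq u).1 - (pq v).1) ((pq u).2 - (pq v).2)
  rw [← this]; ring_nf

lemma toPQ_fromPQ' (v₀ : V) (pq : V → ℂ × ℂ) (h0 : pq v₀ = (0, 0)) :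
    toPQ v₀ (fromPQ' pq) = pq := by
  funext v
  have e0 : ∀ w, fromPQ' pq w 0 = ((pq w).1 + (pq w).2) / 2 := fun w => rfl
  have e1 : ∀ w, fromPQ' pq w 1 = ((pq w).1 - (pq w).2) / (2 * Complex.I) := fun w => rfl
  have hI := Complex.I_ne_zero
  simp only [toPQ, e0, e1, h0]
  ext
  · simp only
    field_simp
    ring_nf
  · simp only
    field_simp
    ring_nf

lemma fromPQ'_toPQ (v₀ : V) (ρ : V → Fin 2 → ℂ) :
    EquivRealization (fromPQ' (toPQ v₀ ρ)) ρ := by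
  refine ⟨1, ρ v₀, by simp, by simp, fun v => ?_⟩
  funext i
  have hI := Complex.I_ne_zero
  fin_cases i <;>
    simp only [Matrix.one_mulVec, Pi.add_apply, fromPQ', toPQ, Fin.zero_eta, Fin.mk_one, Matrix.cons_val_zero,
      Matrix.cons_val_one, Matrix.head_cons] <;> field_simp <;> ring

lemma fwd_rel (v₀ : V) (ρ ρ' : V → Fin 2 → ℂ) (h : EquivRealization ρ ρ') :
    PQOrbitRel (toPQ v₀ ρ) (toPQ v₀ ρ') := by
  obtain ⟨A, b, hA, hdet, hρ⟩ := h
  obtain ⟨hda, hcb, h1⟩ := rot_entries A hA hdet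
  set a := A 0 0; set bb := A 1 0
  have hmul : (a + Complex.I * bb) * (a - Complex.I * bb) = 1 := by
    linear_combination h1 - bb ^ 2 * Complex.I_sq
  have hval : (a + Complex.I * bb)⁻¹ = a - Complex.I * bb :=
    inv_eq_of_mul_eq_one_right hmul
  refine ⟨⟨a + Complex.I * bb, a - Complex.I * bb, hmul, by linear_combination hmul⟩,
    fun v => ?_⟩
  have hx : ∀ w, ρ' w 0 = a * ρ w 0 + A 0 1 * ρ w 1 + b 0 := by
    intro w
    have := congrFun (hρ w) 0
    simpa [Matrix.mulVec, dotProduct, Fin.sum_univ_two] using this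
  have hy : ∀ w, ρ' w 1 = bb * ρ w 0 + A 1 1 * ρ w 1 + b 1 := by
    intro w
    have := congrFun (hρ w) 1
    simpa [Matrix.mulVec, dotProduct, Fin.sum_univ_two] using this
  simp only [toPQ, Units.val_mk, hval]
  ext
  · simp only
    rw [hx v, hx v₀, hy v, hy v₀, hcb, hda]
    linear_combination bb * (ρ v₀ 1 - ρ v 1) * Complex.I_sq
  · simp only
    rw [hx v, hx v₀, hy v, hy v₀, hcb, hda]
    linear_combination bb * (ρ v₀ 1 - ρ v 1) * Complex.I_sq

lemma bwd_rel (pq pq' : V → ℂ × ℂ) (h : PQOrbitRel pq pq') :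
    EquivRealization (fromPQ' pq) (fromPQ' pq') := by
  obtain ⟨α, hα⟩ := h
  have hα0 : (α : ℂ) ≠ 0 := α.ne_zero
  have hinv : (α : ℂ) * (α : ℂ)⁻¹ = 1 := mul_inv_cancel₀ hα0
  have hI := Complex.I_ne_zero
  set a : ℂ := ((α : ℂ) + (α : ℂ)⁻¹) / 2 with ha
  set bb : ℂ := (((α : ℂ)⁻¹ - (α : ℂ)) * Complex.I) / 2 with hbb
  have h1 : a ^ 2 + bb ^ 2 = 1 := by
    rw [ha, hbb]
    linear_combination (((α : ℂ)⁻¹ - (α : ℂ)) ^ 2 / 4) * Complex.I_sq + hinv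
  refine ⟨!![a, -bb; bb, a], 0, ?_, ?_, fun v => ?_⟩
  · have hT : (!![a, -bb; bb, a]).transpose = !![a, bb; -bb, a] := by
      ext i j; fin_cases i <;> fin_cases j <;> rfl
    rw [hT, Matrix.mul_fin_two, Matrix.one_fin_two,
      show a * a + bb * bb = 1 by linear_combination h1,
      show a * -bb + bb * a = (0 : ℂ) by ring,
      show -bb * a + a * bb = (0 : ℂ) by ring,
      show -bb * -bb + a * a = (1 : ℂ) by linear_combination h1]
  · rw [Matrix.det_fin_two_of]
    linear_combination h1
  · funext i
    have hv := hα v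
    fin_cases i
    · simp [fromPQ', Matrix.mulVec, dotProduct, Fin.sum_univ_two, hv, ha, hbb]
      field_simp
      ring_nf
    · simp [fromPQ', Matrix.mulVec, dotProduct, Fin.sum_univ_two, hv, ha, hbb]
      field_simp
      ring_nf
      linear_combination (((α : ℂ) ^ 2 - 1) *
        ((pq v).1 + (pq v).2)) * Complex.I_sq

end Rel
/-- For any labeling `lam`, the map `toPQ` sends compatible realizations to the
solution set and induces a bijection between equivalence classes of compatible realizations
(under direct isometries of `ℂ²`) and orbits of the solution set under the `ℂ*`-action.
In particular, the number of equivalence classes equals the number of orbits. -/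
theorem realization_classes_equiv_pq_orbits {V : Type*} [Finite V] (G : SimpleGraph V)
    (v₀ : V) (lam : G.edgeSet → ℂ) :
    ∃ hsol : ∀ ρ : V → Fin 2 → ℂ, Compatible G lam ρ → IsPQSolution G v₀ lam (toPQ v₀ ρ),
      ∃ e : RealizationClasses G lam ≃ PQOrbits G v₀ lam,
        (∀ (ρ : V → Fin 2 → ℂ) (h : Compatible G lam ρ),
          e (Quot.mk _ ⟨ρ, h⟩) = Quot.mk _ ⟨toPQ v₀ ρ, hsol ρ h⟩) ∧
        Nat.card (RealizationClasses G lam) = Nat.card (PQOrbits G v₀ lam) := by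
  refine ⟨fun ρ h => toPQ_sol G v₀ lam ρ h, ?_⟩
  let f : RealizationClasses G lam → PQOrbits G v₀ lam :=
    Quot.map (fun s => ⟨toPQ v₀ s.1, toPQ_sol G v₀ lam s.1 s.2⟩)
      (fun s s' h => fwd_rel v₀ s.1 s'.1 h)
  let g : PQOrbits G v₀ lam → RealizationClasses G lam :=
    Quot.map (fun s => ⟨fromPQ' s.1, fromPQ'_compat G v₀ lam s.1 s.2⟩)
      (fun s s' h => bwd_rel s.1 s'.1 h)
  have hgf : ∀ x, g (f x) = x := by
    intro x
    induction x using Quot.ind with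
    | _ s => exact Quot.sound (fromPQ'_toPQ v₀ s.1)
  have hfg : ∀ y, f (g y) = y := by
    intro y
    induction y using Quot.ind with
    | _ s =>
      have h1 : toPQ v₀ (fromPQ' s.1) = s.1 := toPQ_fromPQ' v₀ s.1 s.2.1
      exact congrArg (Quot.mk _) (Subtype.ext h1)
  exact ⟨⟨f, g, hgf, hfg⟩, fun ρ h => rfl, Nat.card_congr ⟨f, g, hgf, hfg⟩⟩
end

section
/- Every Laman graph G = (V, E) with |V| ≥ 2 is connected; consequently, with dim(G) := |V| − (number of connected components of G), one has dim(G) + dim(G) = |E| + 1, i.e., the pair (G, G) is pseudo-Laman. -/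
open SimpleGraph

lemma laman_edge_bound {V : Type*} [Finite V] (G : SimpleGraph V)
    (hG : ∀ H : G.Subgraph, 2 ≤ H.verts.ncard →
      (H.edgeSet.ncard : ℤ) ≤ 2 * (H.verts.ncard : ℤ) - 3)
    (S : Set V) (hS : S.Nonempty) :
    (((⊤ : G.Subgraph).induce S).edgeSet.ncard : ℤ) ≤ 2 * (S.ncard : ℤ) - 2 := by
  rcases le_or_gt 2 S.ncard with h | h
  · have := hG ((⊤ : G.Subgraph).induce S) h
    simp only [Subgraph.induce_verts] at this
    omega
  · have h1 : S.ncard = 1 := by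
      have := Set.ncard_pos (Set.toFinite S) |>.mpr hS
      omega
    obtain ⟨a, ha⟩ := Set.ncard_eq_one.mp h1
    have hempty : ((⊤ : G.Subgraph).induce S).edgeSet = ∅ := by
      ext e
      induction e using Sym2.ind with
      | _ x y =>
        simp only [Subgraph.mem_edgeSet, Subgraph.induce_adj, ha, Set.mem_singleton_iff,
          Set.mem_empty_iff_false, iff_false]
        rintro ⟨rfl, rfl, hadj⟩
        simp only [Subgraph.top_adj] at hadj
        exact G.loopless.irrefl _ hadj
    rw [hempty]
    simp [h1]

/-- Every Laman graph with `|V| ≥ 2` is connected; consequently, with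
`dim(G) := |V| - (number of connected components)`, one has `dim(G) + dim(G) = |E| + 1`,
i.e. the pair `(G, G)` is pseudo-Laman. -/
theorem laman_connected_pseudo_laman {V : Type*} [Finite V] (G : SimpleGraph V)
    (hV : 2 ≤ Nat.card V) (hG : IsLaman G) :
    G.Connected ∧
      (Nat.card V - Nat.card G.ConnectedComponent) +
        (Nat.card V - Nat.card G.ConnectedComponent) = G.edgeSet.ncard + 1 := by
  have hne : Nonempty V := (Nat.card_pos_iff.mp (by omega)).1
  have hpre : G.Preconnected := by
    intro u v
    by_contra hr
    set S : Set V := {w | G.Reachable u w} with hSdef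
    have huS : u ∈ S := Reachable.refl u
    have hvS : v ∉ S := hr
    have hsplit : G.edgeSet ⊆
        ((⊤ : G.Subgraph).induce S).edgeSet ∪ ((⊤ : G.Subgraph).induce Sᶜ).edgeSet := by
      intro e he
      induction e using Sym2.ind with
      | _ a b =>
        rw [mem_edgeSet] at he
        by_cases haS : a ∈ S
        · left
          rw [Subgraph.mem_edgeSet, Subgraph.induce_adj]
          exact ⟨haS, haS.trans he.reachable, by simpa using he⟩
        · right
          rw [Subgraph.mem_edgeSet, Subgraph.induce_adj]
          exact ⟨haS, fun hbS => haS (hbS.trans he.symm.reachable), by simpa using he⟩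
    have hcard : (G.edgeSet.ncard : ℤ) ≤
        (((⊤ : G.Subgraph).induce S).edgeSet.ncard : ℤ) +
        (((⊤ : G.Subgraph).induce Sᶜ).edgeSet.ncard : ℤ) := by
      have hun := Set.ncard_union_le ((⊤ : G.Subgraph).induce S).edgeSet
        ((⊤ : G.Subgraph).induce Sᶜ).edgeSet
      have hle := Set.ncard_le_ncard hsplit (Set.toFinite _)
      omega
    have h1 := laman_edge_bound G hG.2 S ⟨u, huS⟩
    have h2 := laman_edge_bound G hG.2 Sᶜ ⟨v, hvS⟩
    have hsum : S.ncard + Sᶜ.ncard = Nat.card V := Set.ncard_add_ncard_compl S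
    have hE := hG.1
    have hsum' : (S.ncard : ℤ) + (Sᶜ.ncard : ℤ) = (Nat.card V : ℤ) := by exact_mod_cast hsum
    linarith
  have hconn : G.Connected := Connected.mk hpre
  have hcc : Nat.card G.ConnectedComponent = 1 := by
    rw [Nat.card_eq_one_iff_unique]
    refine ⟨⟨fun c d => ?_⟩, ⟨G.connectedComponentMk (Classical.arbitrary V)⟩⟩
    obtain ⟨a, rfl⟩ := c.exists_rep
    obtain ⟨b, rfl⟩ := d.exists_rep
    exact ConnectedComponent.sound (hpre a b)
  refine ⟨hconn, ?_⟩
  have hE := hG.1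
  have hE' : G.edgeSet.ncard = 2 * Nat.card V - 3 := by omega
  omega
end

section
/- Let G₁ = (V₁, E₁) and G₂ = (V₂, E₂) be Laman graphs such that V₁ ∩ V₂ = {a, b} consists of exactly two vertices and E₁ ∩ E₂ = {{a, b}}, with {a,b} an edge of both graphs. Then the union graph G₁ ∪ G₂ = (V₁ ∪ V₂, E₁ ∪ E₂) is a Laman graph with |V₁| + |V₂| − 2 vertices. -/
open SimpleGraph

section Helpers

variable {V : Type*} [Finite V]

/-- The pullback of a vertex set `S ⊆ G.verts` to a subgraph of `G.coe`. -/
def pullSub (G : (⊤ : SimpleGraph V).Subgraph) (S : Set V) : G.coe.Subgraph where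
  verts := Subtype.val ⁻¹' S
  Adj u v := G.Adj u.1 v.1 ∧ u.1 ∈ S ∧ v.1 ∈ S
  adj_sub h := h.1
  edge_vert h := h.2.1
  symm := ⟨fun u v h => ⟨G.adj_symm h.1, h.2.2, h.2.1⟩⟩

lemma pullSub_verts_ncard (G : (⊤ : SimpleGraph V).Subgraph) (S : Set V)
    (hS : S ⊆ G.verts) : (pullSub G S).verts.ncard = S.ncard := by
  have himg : Subtype.val '' (pullSub G S).verts = S := by
    rw [pullSub, Set.image_preimage_eq_inter_range, Subtype.range_coe]
    exact Set.inter_eq_self_of_subset_left hS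
  rw [← Set.ncard_image_of_injective ((pullSub G S).verts) Subtype.val_injective, himg]

lemma pullSub_edge_image (G : (⊤ : SimpleGraph V).Subgraph) (S : Set V)
    (hS : S ⊆ G.verts) :
    Sym2.map Subtype.val '' (pullSub G S).edgeSet = (G.induce S).edgeSet := by
  ext e
  constructor
  · rintro ⟨e', he', rfl⟩
    induction e' using Sym2.ind with
    | _ x y =>
      rw [Subgraph.mem_edgeSet] at he'
      simpa [Subgraph.mem_edgeSet, Subgraph.induce_adj] using
        ⟨he'.2.1, he'.2.2, he'.1⟩
  · intro he
    induction e using Sym2.ind with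
    | _ u v =>
      rw [Subgraph.mem_edgeSet, Subgraph.induce_adj] at he
      exact ⟨s(⟨u, hS he.1⟩, ⟨v, hS he.2.1⟩),
        Subgraph.mem_edgeSet.mpr ⟨he.2.2, he.1, he.2.1⟩, rfl⟩

lemma laman_induce_bound (G : (⊤ : SimpleGraph V).Subgraph) (h : IsLaman G.coe)
    (S : Set V) (hS : S ⊆ G.verts) (h2 : 2 ≤ S.ncard) :
    (((G.induce S).edgeSet.ncard : ℤ)) ≤ 2 * (S.ncard : ℤ) - 3 := by
  have hv := pullSub_verts_ncard G S hS
  have he : (G.induce S).edgeSet.ncard = (pullSub G S).edgeSet.ncard := by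
    rw [← pullSub_edge_image G S hS,
      Set.ncard_image_of_injective _ (Sym2.map.injective Subtype.val_injective)]
  rw [he, ← hv]
  exact h.2 _ (hv ▸ h2)

lemma induce_edgeSet_subset (G : (⊤ : SimpleGraph V).Subgraph) (S : Set V) :
    (G.induce S).edgeSet ⊆ G.edgeSet := by
  intro e he
  induction e using Sym2.ind with
  | _ u v =>
    rw [Subgraph.mem_edgeSet] at he ⊢
    exact he.2.2

lemma induce_edgeSet_empty (G : (⊤ : SimpleGraph V).Subgraph) (S : Set V)
    (h1 : S.ncard ≤ 1) : (G.induce S).edgeSet = ∅ := by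
  ext e
  simp only [Set.mem_empty_iff_false, iff_false]
  induction e using Sym2.ind with
  | _ u v =>
    rw [Subgraph.mem_edgeSet]
    rintro ⟨hu, hv, hadj⟩
    have hne : u ≠ v := hadj.ne
    have : ({u, v} : Set V).ncard ≤ S.ncard :=
      Set.ncard_le_ncard (by rintro x (rfl | rfl) <;> assumption) (Set.toFinite S)
    rw [Set.ncard_pair hne] at this
    omega

lemma coe_edgeSet_ncard (G : (⊤ : SimpleGraph V).Subgraph) :
    G.coe.edgeSet.ncard = G.edgeSet.ncard := by
  rw [← Subgraph.image_coe_edgeSet_coe G,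
    Set.ncard_image_of_injective _ (Sym2.map.injective Subtype.val_injective)]

end Helpers

/-- If two Laman graphs `G₁ = (V₁, E₁)` and `G₂ = (V₂, E₂)` (given as subgraphs
of the complete graph on an ambient vertex set) share exactly two vertices `a ≠ b` and
exactly the one edge `{a, b}`, which is an edge of both, then their union is a Laman graph
with `|V₁| + |V₂| - 2` vertices. -/
theorem laman_glue_edge {V : Type*} [Finite V]
    (H₁ H₂ : (⊤ : SimpleGraph V).Subgraph) (a b : V) (hab : a ≠ b)
    (h₁ : IsLaman H₁.coe) (h₂ : IsLaman H₂.coe)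
    (hverts : H₁.verts ∩ H₂.verts = {a, b})
    (hedges : H₁.edgeSet ∩ H₂.edgeSet = {s(a, b)})
    (he₁ : H₁.Adj a b) (he₂ : H₂.Adj a b) :
    IsLaman (H₁ ⊔ H₂).coe ∧
      (H₁ ⊔ H₂).verts.ncard = H₁.verts.ncard + H₂.verts.ncard - 2 := by
  have ha1 : a ∈ H₁.verts := (hverts ▸ (by simp : a ∈ ({a, b} : Set V))).1
  have ha2 : a ∈ H₂.verts := (hverts ▸ (by simp : a ∈ ({a, b} : Set V))).2
  have hb1 : b ∈ H₁.verts := (hverts ▸ (by simp : b ∈ ({a, b} : Set V))).1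
  have hb2 : b ∈ H₂.verts := (hverts ▸ (by simp : b ∈ ({a, b} : Set V))).2
  -- vertex count
  have hVsup : (H₁ ⊔ H₂).verts = H₁.verts ∪ H₂.verts := rfl
  have hVcard : (H₁.verts ∪ H₂.verts).ncard + 2 = H₁.verts.ncard + H₂.verts.ncard := by
    have := Set.ncard_union_add_ncard_inter H₁.verts H₂.verts
    rwa [hverts, Set.ncard_pair hab] at this
  have hvcount : (H₁ ⊔ H₂).verts.ncard = H₁.verts.ncard + H₂.verts.ncard - 2 := by
    rw [hVsup]; omega
  refine ⟨⟨?_, ?_⟩, hvcount⟩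
  · -- edge count
    have hEcard : (H₁.edgeSet ∪ H₂.edgeSet).ncard + 1 = H₁.edgeSet.ncard + H₂.edgeSet.ncard := by
      have := Set.ncard_union_add_ncard_inter H₁.edgeSet H₂.edgeSet
      rwa [hedges, Set.ncard_singleton] at this
    have e1 := h₁.1
    have e2 := h₂.1
    rw [Nat.card_coe_set_eq, coe_edgeSet_ncard] at e1 e2
    rw [coe_edgeSet_ncard, Nat.card_coe_set_eq, Subgraph.edgeSet_sup, hVsup]
    have h2a : 2 ≤ H₁.verts.ncard := by
      have : ({a, b} : Set V).ncard ≤ H₁.verts.ncard :=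
        Set.ncard_le_ncard (by rintro x (rfl | rfl) <;> assumption) (Set.toFinite _)
      rwa [Set.ncard_pair hab] at this
    push_cast at e1 e2 ⊢
    have hEcard' : ((H₁.edgeSet ∪ H₂.edgeSet).ncard : ℤ) + 1
        = (H₁.edgeSet.ncard : ℤ) + H₂.edgeSet.ncard := by exact_mod_cast hEcard
    have hVcard' : ((H₁.verts ∪ H₂.verts).ncard : ℤ) + 2
        = (H₁.verts.ncard : ℤ) + H₂.verts.ncard := by exact_mod_cast hVcard
    linarith
  · -- subgraph condition
    intro H hH2
    set S : Set V := Subtype.val '' H.verts with hSdef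
    have hScard : S.ncard = H.verts.ncard :=
      Set.ncard_image_of_injective _ Subtype.val_injective
    have hSsub : S ⊆ H₁.verts ∪ H₂.verts := by
      rintro x ⟨y, hy, rfl⟩; exact y.2
    set S₁ : Set V := S ∩ H₁.verts with hS1def
    set S₂ : Set V := S ∩ H₂.verts with hS2def
    set E₁ : Set (Sym2 V) := (H₁.induce S₁).edgeSet with hE1def
    set E₂ : Set (Sym2 V) := (H₂.induce S₂).edgeSet with hE2def
    -- the image of H's edges lies in E₁ ∪ E₂
    have hEsub : Sym2.map Subtype.val '' H.edgeSet ⊆ E₁ ∪ E₂ := by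
      rintro e ⟨e', he', rfl⟩
      induction e' using Sym2.ind with
      | _ x y =>
        rw [Subgraph.mem_edgeSet] at he'
        have hx : x.1 ∈ S := ⟨x, he'.fst_mem, rfl⟩
        have hy : y.1 ∈ S := ⟨y, he'.snd_mem, rfl⟩
        have hadj : (H₁ ⊔ H₂).Adj x.1 y.1 := H.adj_sub he'
        rcases Subgraph.sup_adj.mp hadj with h | h
        · exact Or.inl (Subgraph.mem_edgeSet.mpr
            ⟨⟨hx, h.fst_mem⟩, ⟨hy, h.snd_mem⟩, h⟩)
        · exact Or.inr (Subgraph.mem_edgeSet.mpr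
            ⟨⟨hx, h.fst_mem⟩, ⟨hy, h.snd_mem⟩, h⟩)
    have hHE : H.edgeSet.ncard = (Sym2.map Subtype.val '' H.edgeSet).ncard :=
      (Set.ncard_image_of_injective _ (Sym2.map.injective Subtype.val_injective)).symm
    have hEle : (H.edgeSet.ncard : ℤ) ≤ (E₁ ∪ E₂).ncard := by
      rw [hHE]
      exact_mod_cast Set.ncard_le_ncard hEsub (Set.toFinite _)
    -- cardinality of S₁, S₂
    have hSunion : S₁ ∪ S₂ = S := by
      rw [hS1def, hS2def, ← Set.inter_union_distrib_left]
      exact Set.inter_eq_self_of_subset_left hSsub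
    have hSinter : S₁ ∩ S₂ = S ∩ {a, b} := by
      rw [hS1def, hS2def, ← hverts]; ext x; simp; tauto
    have hScards : S.ncard + (S ∩ ({a, b} : Set V)).ncard = S₁.ncard + S₂.ncard := by
      have := Set.ncard_union_add_ncard_inter S₁ S₂
      rwa [hSunion, hSinter] at this
    have hS2' : 2 ≤ S.ncard := hScard ▸ hH2
    rw [← hScard]
    -- case split on whether both a and b lie in S
    by_cases hcase : a ∈ S ∧ b ∈ S
    · -- both glue vertices present
      obtain ⟨haS, hbS⟩ := hcase
      have hTcard : (S ∩ ({a, b} : Set V)).ncard = 2 := by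
        rw [Set.inter_eq_self_of_subset_right (by rintro x (rfl | rfl) <;> assumption),
          Set.ncard_pair hab]
      have hs1 : 2 ≤ S₁.ncard := by
        have : ({a, b} : Set V).ncard ≤ S₁.ncard :=
          Set.ncard_le_ncard (by rintro x (rfl | rfl) <;> exact ⟨by assumption, by assumption⟩)
            (Set.toFinite _)
        rwa [Set.ncard_pair hab] at this
      have hs2 : 2 ≤ S₂.ncard := by
        have : ({a, b} : Set V).ncard ≤ S₂.ncard :=
          Set.ncard_le_ncard (by rintro x (rfl | rfl) <;> exact ⟨by assumption, by assumption⟩)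
            (Set.toFinite _)
        rwa [Set.ncard_pair hab] at this
      have hb1' := laman_induce_bound H₁ h₁ S₁ Set.inter_subset_right hs1
      have hb2' := laman_induce_bound H₂ h₂ S₂ Set.inter_subset_right hs2
      -- s(a,b) lies in E₁ ∩ E₂
      have hmem : s(a, b) ∈ E₁ ∩ E₂ :=
        ⟨Subgraph.mem_edgeSet.mpr ⟨⟨haS, ha1⟩, ⟨hbS, hb1⟩, he₁⟩,
         Subgraph.mem_edgeSet.mpr ⟨⟨haS, ha2⟩, ⟨hbS, hb2⟩, he₂⟩⟩
      have hIcard : 1 ≤ (E₁ ∩ E₂).ncard :=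
        (Set.ncard_pos (Set.toFinite _)).mpr ⟨_, hmem⟩
      have hUcard := Set.ncard_union_add_ncard_inter E₁ E₂
      have h1 : ((E₁ ∪ E₂).ncard : ℤ) + (E₁ ∩ E₂).ncard = (E₁.ncard : ℤ) + E₂.ncard := by
        exact_mod_cast hUcard
      have h2 : (1 : ℤ) ≤ (E₁ ∩ E₂).ncard := by exact_mod_cast hIcard
      have h3 : ((S.ncard : ℤ)) + 2 = (S₁.ncard : ℤ) + S₂.ncard := by
        have : S.ncard + 2 = S₁.ncard + S₂.ncard := by rw [← hTcard]; exact hScards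
        exact_mod_cast this
      linarith
    · -- at most one glue vertex present
      have hTcard : (S ∩ ({a, b} : Set V)).ncard ≤ 1 := by
        rcases not_and_or.mp hcase with h | h
        · have : S ∩ ({a, b} : Set V) ⊆ {b} := by
            rintro x ⟨hxS, rfl | rfl⟩
            · exact absurd hxS h
            · rfl
          simpa using Set.ncard_le_ncard this (Set.toFinite _)
        · have : S ∩ ({a, b} : Set V) ⊆ {a} := by
            rintro x ⟨hxS, rfl | rfl⟩
            · rfl
            · exact absurd hxS h
          simpa using Set.ncard_le_ncard this (Set.toFinite _)
      have hUle : ((E₁ ∪ E₂).ncard : ℤ) ≤ (E₁.ncard : ℤ) + E₂.ncard := by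
        exact_mod_cast Set.ncard_union_le E₁ E₂
      have h3 : (S₁.ncard : ℤ) + S₂.ncard ≤ (S.ncard : ℤ) + 1 := by
        have : S₁.ncard + S₂.ncard ≤ S.ncard + 1 := by omega
        exact_mod_cast this
      have hs1S : (S₁.ncard : ℤ) ≤ S.ncard := by
        exact_mod_cast Set.ncard_le_ncard Set.inter_subset_left (Set.toFinite _)
      have hs2S : (S₂.ncard : ℤ) ≤ S.ncard := by
        exact_mod_cast Set.ncard_le_ncard Set.inter_subset_left (Set.toFinite _)
      have hS2'' : (2 : ℤ) ≤ S.ncard := by exact_mod_cast hS2'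
      rcases le_or_gt 2 S₁.ncard with hs1 | hs1 <;> rcases le_or_gt 2 S₂.ncard with hs2 | hs2
      · have hb1' := laman_induce_bound H₁ h₁ S₁ Set.inter_subset_right hs1
        have hb2' := laman_induce_bound H₂ h₂ S₂ Set.inter_subset_right hs2
        have hs1' : (2 : ℤ) ≤ S₁.ncard := by exact_mod_cast hs1
        have hs2' : (2 : ℤ) ≤ S₂.ncard := by exact_mod_cast hs2
        linarith
      · have hb1' := laman_induce_bound H₁ h₁ S₁ Set.inter_subset_right hs1
        have hE2e : E₂ = ∅ := induce_edgeSet_empty H₂ S₂ (by omega)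
        have : (E₂.ncard : ℤ) = 0 := by rw [hE2e]; simp
        linarith
      · have hb2' := laman_induce_bound H₂ h₂ S₂ Set.inter_subset_right hs2
        have hE1e : E₁ = ∅ := induce_edgeSet_empty H₁ S₁ (by omega)
        have : (E₁.ncard : ℤ) = 0 := by rw [hE1e]; simp
        linarith
      · have hE1e : E₁ = ∅ := induce_edgeSet_empty H₁ S₁ (by omega)
        have hE2e : E₂ = ∅ := induce_edgeSet_empty H₂ S₂ (by omega)
        have t1 : (E₁.ncard : ℤ) = 0 := by rw [hE1e]; simp
        have t2 : (E₂.ncard : ℤ) = 0 := by rw [hE2e]; simp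
        linarith
end

section
/- Let G₁ = (V₁, E₁) and G₂ = (V₂, E₂) be Laman graphs such that V₁ ∩ V₂ = {a, b, c} consists of exactly three vertices and E₁ ∩ E₂ = {{a,b}, {b,c}, {a,c}}, with these three edges belonging to both graphs (the shared subgraph is a triangle). Then the union graph G₁ ∪ G₂ = (V₁ ∪ V₂, E₁ ∪ E₂) is a Laman graph with |V₁| + |V₂| − 3 vertices. -/
open SimpleGraph

section Aux

variable {V : Type*} {G : SimpleGraph V}

lemma edgeSet_coeSubgraph' {G' : G.Subgraph} (K : G'.coe.Subgraph) :
    (SimpleGraph.Subgraph.coeSubgraph K).edgeSet = Sym2.map (↑) '' K.edgeSet := by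
  ext e
  refine Sym2.ind (fun u v => ?_) e
  simp only [SimpleGraph.Subgraph.mem_edgeSet, SimpleGraph.Subgraph.coeSubgraph_adj,
    Set.mem_image]
  constructor
  · rintro ⟨hu, hv, h⟩
    exact ⟨s(⟨u, hu⟩, ⟨v, hv⟩), h, rfl⟩
  · rintro ⟨e', he', hm⟩
    induction e' using Sym2.ind with
    | _ x y =>
      rw [Sym2.map_pair_eq, Sym2.eq_iff] at hm
      rcases hm with ⟨hx, hy⟩ | ⟨hx, hy⟩
      · subst hx; subst hy; exact ⟨x.2, y.2, he'⟩
      · subst hx; subst hy; exact ⟨y.2, x.2, he'.symm⟩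

lemma ncard_verts_coeSubgraph' {G' : G.Subgraph} (K : G'.coe.Subgraph) :
    (SimpleGraph.Subgraph.coeSubgraph K).verts.ncard = K.verts.ncard := by
  rw [SimpleGraph.Subgraph.verts_coeSubgraph]
  exact Set.ncard_image_of_injective _ Subtype.val_injective

lemma ncard_edgeSet_coeSubgraph' {G' : G.Subgraph} (K : G'.coe.Subgraph) :
    (SimpleGraph.Subgraph.coeSubgraph K).edgeSet.ncard = K.edgeSet.ncard := by
  rw [edgeSet_coeSubgraph']
  exact Set.ncard_image_of_injective _ (Sym2.map.injective Subtype.val_injective)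

lemma isLaman_coe_iff' {V : Type*} [Finite V] {G : SimpleGraph V} (G' : G.Subgraph) :
    IsLaman G'.coe ↔
      ((G'.edgeSet.ncard : ℤ) = 2 * (G'.verts.ncard : ℤ) - 3 ∧
        ∀ K : G.Subgraph, K ≤ G' → 2 ≤ K.verts.ncard →
          (K.edgeSet.ncard : ℤ) ≤ 2 * (K.verts.ncard : ℤ) - 3) := by
  have hv : Nat.card ↥G'.verts = G'.verts.ncard := Nat.card_coe_set_eq _
  have he : G'.coe.edgeSet.ncard = G'.edgeSet.ncard := by
    rw [← SimpleGraph.Subgraph.image_coe_edgeSet_coe]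
    exact (Set.ncard_image_of_injective _ (Sym2.map.injective Subtype.val_injective)).symm
  constructor
  · rintro ⟨h1, h2⟩
    refine ⟨by rw [← he, ← hv]; exact h1, fun K hKle hK2 => ?_⟩
    have hco : SimpleGraph.Subgraph.coeSubgraph (G'.restrict K) = K := by
      rw [SimpleGraph.Subgraph.coeSubgraph_restrict_eq, inf_eq_right.mpr hKle]
    have hv' := ncard_verts_coeSubgraph' (G'.restrict K)
    have he' := ncard_edgeSet_coeSubgraph' (G'.restrict K)
    rw [hco] at hv' he'
    rw [hv', he']
    exact h2 _ (by rw [← hv']; exact hK2)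
  · rintro ⟨h1, h2⟩
    refine ⟨by rw [he, hv]; exact h1, fun K hK2 => ?_⟩
    have hv' := ncard_verts_coeSubgraph' K
    have he' := ncard_edgeSet_coeSubgraph' K
    rw [← hv', ← he']
    exact h2 _ (SimpleGraph.Subgraph.coeSubgraph_le K)
      (by rw [hv']; exact hK2)

lemma edgeSet_eq_empty_of_ncard_le_one' [Finite V] {K : G.Subgraph}
    (h : K.verts.ncard ≤ 1) : K.edgeSet = ∅ := by
  ext e
  refine Sym2.ind (fun u v => ?_) e
  simp only [SimpleGraph.Subgraph.mem_edgeSet, Set.mem_empty_iff_false, iff_false]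
  intro hadj
  have h1 : 1 < K.verts.ncard :=
    (Set.one_lt_ncard_iff (Set.toFinite _)).mpr
      ⟨u, v, K.edge_vert hadj, K.edge_vert hadj.symm, hadj.ne⟩
  omega

end Aux

/-- If two Laman graphs `G₁ = (V₁, E₁)` and `G₂ = (V₂, E₂)` share exactly
three vertices `a`, `b`, `c` and exactly the three edges `{a,b}`, `{b,c}`, `{a,c}` of a
common triangle (edges of both graphs), then their union is a Laman graph with
`|V₁| + |V₂| - 3` vertices. -/
theorem laman_glue_triangle {V : Type*} [Finite V]
    (H₁ H₂ : (⊤ : SimpleGraph V).Subgraph) (a b c : V)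
    (hab : a ≠ b) (hbc : b ≠ c) (hac : a ≠ c)
    (h₁ : IsLaman H₁.coe) (h₂ : IsLaman H₂.coe)
    (hverts : H₁.verts ∩ H₂.verts = {a, b, c})
    (hedges : H₁.edgeSet ∩ H₂.edgeSet = {s(a, b), s(b, c), s(a, c)})
    (he₁ab : H₁.Adj a b) (he₁bc : H₁.Adj b c) (he₁ac : H₁.Adj a c)
    (he₂ab : H₂.Adj a b) (he₂bc : H₂.Adj b c) (he₂ac : H₂.Adj a c) :
    IsLaman (H₁ ⊔ H₂).coe ∧
      (H₁ ⊔ H₂).verts.ncard = H₁.verts.ncard + H₂.verts.ncard - 3 := by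
  classical
  have habc1 : ({a, b, c} : Set V) ⊆ H₁.verts := by
    rw [← hverts]; exact Set.inter_subset_left
  have habc2 : ({a, b, c} : Set V) ⊆ H₂.verts := by
    rw [← hverts]; exact Set.inter_subset_right
  have he₁ba := he₁ab.symm; have he₁cb := he₁bc.symm; have he₁ca := he₁ac.symm
  have he₂ba := he₂ab.symm; have he₂cb := he₂bc.symm; have he₂ca := he₂ac.symm
  have hH₁tri : ∀ u v : V, u ∈ ({a, b, c} : Set V) → v ∈ ({a, b, c} : Set V) →
      u ≠ v → H₁.Adj u v := by
    intro u v hu hv hne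
    simp only [Set.mem_insert_iff, Set.mem_singleton_iff] at hu hv
    rcases hu with rfl | rfl | rfl <;> rcases hv with rfl | rfl | rfl <;>
      first | exact absurd rfl hne | assumption
  have hH₂tri : ∀ u v : V, u ∈ ({a, b, c} : Set V) → v ∈ ({a, b, c} : Set V) →
      u ≠ v → H₂.Adj u v := by
    intro u v hu hv hne
    simp only [Set.mem_insert_iff, Set.mem_singleton_iff] at hu hv
    rcases hu with rfl | rfl | rfl <;> rcases hv with rfl | rfl | rfl <;>
      first | exact absurd rfl hne | assumption
  have hvne : ({a, b, c} : Set V).ncard = 3 := by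
    rw [Set.ncard_insert_of_notMem (by simp [hab, hac]), Set.ncard_pair hbc]
  have heab_bc : s(a, b) ≠ s(b, c) := by simp [Sym2.eq_iff, hab, hac]
  have heab_ac : s(a, b) ≠ s(a, c) := by simp [Sym2.eq_iff, hbc, hac]
  have hebc_ac : s(b, c) ≠ s(a, c) := by simp [Sym2.eq_iff, hab.symm, hbc]
  have hene : ({s(a, b), s(b, c), s(a, c)} : Set (Sym2 V)).ncard = 3 := by
    rw [Set.ncard_insert_of_notMem (by simp [heab_bc, heab_ac]), Set.ncard_pair hebc_ac]
  have hc₁ := (isLaman_coe_iff' H₁).mp h₁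
  have hc₂ := (isLaman_coe_iff' H₂).mp h₂
  have hgv : (H₁.verts ∪ H₂.verts).ncard + 3 = H₁.verts.ncard + H₂.verts.ncard := by
    have := Set.ncard_union_add_ncard_inter H₁.verts H₂.verts
    rw [hverts, hvne] at this
    exact this
  have hge : (H₁.edgeSet ∪ H₂.edgeSet).ncard + 3
      = H₁.edgeSet.ncard + H₂.edgeSet.ncard := by
    have := Set.ncard_union_add_ncard_inter H₁.edgeSet H₂.edgeSet
    rw [hedges, hene] at this
    exact this
  constructor
  · rw [isLaman_coe_iff']
    constructor
    · show ((H₁ ⊔ H₂).edgeSet.ncard : ℤ) = 2 * (((H₁ ⊔ H₂).verts.ncard : ℤ)) - 3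
      rw [SimpleGraph.Subgraph.edgeSet_sup, SimpleGraph.Subgraph.verts_sup]
      have e1 := hc₁.1
      have e2 := hc₂.1
      omega
    · intro K hKle hK2
      -- an abstract triangle subgraph of ⊤
      obtain ⟨T, hTadj, hTabc, hTtri, hTE⟩ :
          ∃ T : (⊤ : SimpleGraph V).Subgraph,
            (∀ u v : V, T.Adj u v → H₁.Adj u v) ∧
            (∀ u v : V, T.Adj u v →
              u ∈ ({a, b, c} : Set V) ∧ v ∈ ({a, b, c} : Set V)) ∧
            (∀ u v : V, u ∈ ({a, b, c} : Set V) → v ∈ ({a, b, c} : Set V) →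
              u ≠ v → T.Adj u v) ∧
            T.edgeSet = ({s(a, b), s(b, c), s(a, c)} : Set (Sym2 V)) := by
        refine ⟨(⊤ : SimpleGraph V).subgraphOfAdj
            (show (⊤ : SimpleGraph V).Adj a b by simp [hab]) ⊔
          ((⊤ : SimpleGraph V).subgraphOfAdj
            (show (⊤ : SimpleGraph V).Adj b c by simp [hbc]) ⊔
           (⊤ : SimpleGraph V).subgraphOfAdj
            (show (⊤ : SimpleGraph V).Adj a c by simp [hac])), ?_, ?_, ?_, ?_⟩
        · intro u v h
          simp only [SimpleGraph.Subgraph.sup_adj, SimpleGraph.subgraphOfAdj_adj] at h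
          rcases h with h | h | h <;> rw [Sym2.eq_iff] at h <;>
            rcases h with ⟨rfl, rfl⟩ | ⟨rfl, rfl⟩ <;> assumption
        · intro u v h
          simp only [SimpleGraph.Subgraph.sup_adj, SimpleGraph.subgraphOfAdj_adj] at h
          rcases h with h | h | h <;> rw [Sym2.eq_iff] at h <;>
            rcases h with ⟨rfl, rfl⟩ | ⟨rfl, rfl⟩ <;> simp
        · intro u v hu hv hne
          simp only [Set.mem_insert_iff, Set.mem_singleton_iff] at hu hv
          simp only [SimpleGraph.Subgraph.sup_adj, SimpleGraph.subgraphOfAdj_adj]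
          rcases hu with rfl | rfl | rfl <;> rcases hv with rfl | rfl | rfl <;>
            first
              | exact absurd rfl hne
              | simp [Sym2.eq_iff]
        · ext e
          induction e using Sym2.ind with
          | _ u v =>
            simp only [SimpleGraph.Subgraph.mem_edgeSet, SimpleGraph.Subgraph.sup_adj,
              SimpleGraph.subgraphOfAdj_adj, Set.mem_insert_iff, Set.mem_singleton_iff]
            constructor <;> rintro (h | h | h)
            · exact Or.inl h.symm
            · exact Or.inr (Or.inl h.symm)
            · exact Or.inr (Or.inr h.symm)
            · exact Or.inl h.symm
            · exact Or.inr (Or.inl h.symm)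
            · exact Or.inr (Or.inr h.symm)
      have hsub : K.verts ⊆ H₁.verts ∪ H₂.verts := hKle.1
      have hK₁le : (K ⊔ T).induce (K.verts ∩ H₁.verts) ≤ H₁ := by
        constructor
        · exact Set.inter_subset_right
        · intro u v h
          rw [SimpleGraph.Subgraph.induce_adj] at h
          obtain ⟨hu, hv, h⟩ := h
          rcases SimpleGraph.Subgraph.sup_adj.mp h with h | h
          · rcases hKle.2 h with h' | h'
            · exact h'
            · exact hH₁tri u v (hverts ▸ ⟨hu.2, H₂.edge_vert h'⟩)
                (hverts ▸ ⟨hv.2, H₂.edge_vert h'.symm⟩) h'.ne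
          · exact hTadj u v h
      have hK₂le : K.induce (K.verts ∩ H₂.verts) ≤ H₂ := by
        constructor
        · exact Set.inter_subset_right
        · intro u v h
          rw [SimpleGraph.Subgraph.induce_adj] at h
          obtain ⟨hu, hv, h⟩ := h
          rcases hKle.2 h with h' | h'
          · exact hH₂tri u v (hverts ▸ ⟨H₁.edge_vert h', hu.2⟩)
              (hverts ▸ ⟨H₁.edge_vert h'.symm, hv.2⟩) h'.ne
          · exact h'
      have hTSmem : ∀ u v : V, T.Adj u v → (∀ x ∈ s(u, v), x ∈ K.verts) →
          s(u, v) ∈ ((K ⊔ T).induce (K.verts ∩ H₁.verts)).edgeSet := by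
        intro u v h hmem
        have h2 := hTabc u v h
        rw [SimpleGraph.Subgraph.mem_edgeSet, SimpleGraph.Subgraph.induce_adj]
        exact ⟨⟨hmem u (Sym2.mem_mk_left u v), habc1 h2.1⟩,
          ⟨hmem v (Sym2.mem_mk_right u v), habc1 h2.2⟩,
          SimpleGraph.Subgraph.sup_adj.mpr (Or.inr h)⟩
      have hsubU : K.edgeSet ∪
            (({s(a, b), s(b, c), s(a, c)} : Set (Sym2 V)) ∩
              {e : Sym2 V | ∀ x ∈ e, x ∈ K.verts}) ⊆
          ((K ⊔ T).induce (K.verts ∩ H₁.verts)).edgeSet ∪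
            (K.induce (K.verts ∩ H₂.verts)).edgeSet := by
        intro e
        induction e using Sym2.ind with
        | _ u v =>
          rintro (he | ⟨htri, hmem⟩)
          · rw [SimpleGraph.Subgraph.mem_edgeSet] at he
            have huS : u ∈ K.verts := K.edge_vert he
            have hvS : v ∈ K.verts := K.edge_vert he.symm
            rcases hKle.2 he with h' | h'
            · refine Or.inl ?_
              rw [SimpleGraph.Subgraph.mem_edgeSet, SimpleGraph.Subgraph.induce_adj]
              exact ⟨⟨huS, H₁.edge_vert h'⟩, ⟨hvS, H₁.edge_vert h'.symm⟩,
                SimpleGraph.Subgraph.sup_adj.mpr (Or.inl he)⟩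
            · refine Or.inr ?_
              rw [SimpleGraph.Subgraph.mem_edgeSet, SimpleGraph.Subgraph.induce_adj]
              exact ⟨⟨huS, H₂.edge_vert h'⟩, ⟨hvS, H₂.edge_vert h'.symm⟩, he⟩
          · have hT' : T.Adj u v := by
              rw [← SimpleGraph.Subgraph.mem_edgeSet, hTE]; exact htri
            exact Or.inl (hTSmem u v hT' hmem)
      have hsubI : K.edgeSet ∩ ({s(a, b), s(b, c), s(a, c)} : Set (Sym2 V)) ⊆
          ((K ⊔ T).induce (K.verts ∩ H₁.verts)).edgeSet ∩
            (K.induce (K.verts ∩ H₂.verts)).edgeSet := by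
        intro e
        induction e using Sym2.ind with
        | _ u v =>
          rintro ⟨heF, htri⟩
          rw [SimpleGraph.Subgraph.mem_edgeSet] at heF
          have hT' : T.Adj u v := by
            rw [← SimpleGraph.Subgraph.mem_edgeSet, hTE]; exact htri
          have habcu := hTabc u v hT'
          have huS : u ∈ K.verts := K.edge_vert heF
          have hvS : v ∈ K.verts := K.edge_vert heF.symm
          refine ⟨hTSmem u v hT' ?_, ?_⟩
          · intro x hx
            rcases Sym2.mem_iff.mp hx with rfl | rfl
            exacts [huS, hvS]
          · rw [SimpleGraph.Subgraph.mem_edgeSet, SimpleGraph.Subgraph.induce_adj]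
            exact ⟨⟨huS, habc2 habcu.1⟩, ⟨hvS, habc2 habcu.2⟩, heF⟩
      have hFTS : K.edgeSet ∩
            (({s(a, b), s(b, c), s(a, c)} : Set (Sym2 V)) ∩
              {e : Sym2 V | ∀ x ∈ e, x ∈ K.verts})
          = K.edgeSet ∩ ({s(a, b), s(b, c), s(a, c)} : Set (Sym2 V)) := by
        ext e
        constructor
        · rintro ⟨h1, h2, -⟩; exact ⟨h1, h2⟩
        · rintro ⟨h1, h2⟩
          exact ⟨h1, h2, fun x hx => SimpleGraph.Subgraph.mem_verts_of_mem_edge h1 hx⟩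
      have hsA3 : (K.verts ∩ ({a, b, c} : Set V)).ncard ≤ 3 := by
        have := Set.ncard_le_ncard
          (Set.inter_subset_right (s := K.verts) (t := ({a, b, c} : Set V)))
          (Set.toFinite _)
        omega
      have hp1 : 2 ≤ (K.verts ∩ ({a, b, c} : Set V)).ncard →
          1 ≤ (({s(a, b), s(b, c), s(a, c)} : Set (Sym2 V)) ∩
            {e : Sym2 V | ∀ x ∈ e, x ∈ K.verts}).ncard := by
        intro h
        obtain ⟨x, y, hx, hy, hxy⟩ := (Set.one_lt_ncard_iff (Set.toFinite _)).mp
          (by omega : 1 < (K.verts ∩ ({a, b, c} : Set V)).ncard)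
        have hT' : T.Adj x y := hTtri x y hx.2 hy.2 hxy
        have hmem : s(x, y) ∈ (({s(a, b), s(b, c), s(a, c)} : Set (Sym2 V)) ∩
            {e : Sym2 V | ∀ x ∈ e, x ∈ K.verts}) := by
          refine ⟨?_, ?_⟩
          · rw [← hTE]; exact SimpleGraph.Subgraph.mem_edgeSet.mpr hT'
          · intro z hz
            rcases Sym2.mem_iff.mp hz with rfl | rfl
            exacts [hx.1, hy.1]
        have := (Set.ncard_pos (Set.toFinite _)).mpr ⟨_, hmem⟩
        omega
      have hp3 : (K.verts ∩ ({a, b, c} : Set V)).ncard = 3 →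
          (({s(a, b), s(b, c), s(a, c)} : Set (Sym2 V)) ∩
            {e : Sym2 V | ∀ x ∈ e, x ∈ K.verts}).ncard = 3 := by
        intro h
        have hEq : K.verts ∩ ({a, b, c} : Set V) = ({a, b, c} : Set V) :=
          Set.eq_of_subset_of_ncard_le Set.inter_subset_right (by omega) (Set.toFinite _)
        have haS : a ∈ K.verts := by
          have : a ∈ K.verts ∩ ({a, b, c} : Set V) := by rw [hEq]; simp
          exact this.1
        have hbS : b ∈ K.verts := by
          have : b ∈ K.verts ∩ ({a, b, c} : Set V) := by rw [hEq]; simp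
          exact this.1
        have hcS : c ∈ K.verts := by
          have : c ∈ K.verts ∩ ({a, b, c} : Set V) := by rw [hEq]; simp
          exact this.1
        have hTSeq : (({s(a, b), s(b, c), s(a, c)} : Set (Sym2 V)) ∩
            {e : Sym2 V | ∀ x ∈ e, x ∈ K.verts})
            = ({s(a, b), s(b, c), s(a, c)} : Set (Sym2 V)) := by
          apply Set.Subset.antisymm Set.inter_subset_left
          intro e he
          refine ⟨he, ?_⟩
          simp only [Set.mem_insert_iff, Set.mem_singleton_iff] at he
          rcases he with rfl | rfl | rfl <;> intro x hx <;>
            rcases Sym2.mem_iff.mp hx with rfl | rfl <;> assumption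
        rw [hTSeq]; exact hene
      have hs1 : (K.verts ∩ ({a, b, c} : Set V)).ncard ≤ (K.verts ∩ H₁.verts).ncard :=
        Set.ncard_le_ncard (fun x hx => ⟨hx.1, habc1 hx.2⟩) (Set.toFinite _)
      have hs2 : (K.verts ∩ ({a, b, c} : Set V)).ncard ≤ (K.verts ∩ H₂.verts).ncard :=
        Set.ncard_le_ncard (fun x hx => ⟨hx.1, habc2 hx.2⟩) (Set.toFinite _)
      have hv9 : K.verts.ncard + (K.verts ∩ ({a, b, c} : Set V)).ncard
          = (K.verts ∩ H₁.verts).ncard + (K.verts ∩ H₂.verts).ncard := by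
        have h1 : (K.verts ∩ H₁.verts) ∪ (K.verts ∩ H₂.verts) = K.verts := by
          rw [← Set.inter_union_distrib_left]
          exact Set.inter_eq_left.mpr hsub
        have h2 : (K.verts ∩ H₁.verts) ∩ (K.verts ∩ H₂.verts)
            = K.verts ∩ ({a, b, c} : Set V) := by
          rw [← hverts]
          ext x
          simp only [Set.mem_inter_iff]
          tauto
        have := Set.ncard_union_add_ncard_inter (K.verts ∩ H₁.verts) (K.verts ∩ H₂.verts)
        rw [h1, h2] at this
        omega
      have hL1 : 2 ≤ (K.verts ∩ H₁.verts).ncard →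
          (((K ⊔ T).induce (K.verts ∩ H₁.verts)).edgeSet.ncard : ℤ)
            ≤ 2 * ((K.verts ∩ H₁.verts).ncard : ℤ) - 3 :=
        fun h => hc₁.2 _ hK₁le h
      have hL2 : 2 ≤ (K.verts ∩ H₂.verts).ncard →
          ((K.induce (K.verts ∩ H₂.verts)).edgeSet.ncard : ℤ)
            ≤ 2 * ((K.verts ∩ H₂.verts).ncard : ℤ) - 3 :=
        fun h => hc₂.2 _ hK₂le h
      have hE1 : (K.verts ∩ H₁.verts).ncard ≤ 1 →
          ((K ⊔ T).induce (K.verts ∩ H₁.verts)).edgeSet.ncard = 0 := fun h => by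
        rw [edgeSet_eq_empty_of_ncard_le_one' h]; exact Set.ncard_empty _
      have hE2 : (K.verts ∩ H₂.verts).ncard ≤ 1 →
          (K.induce (K.verts ∩ H₂.verts)).edgeSet.ncard = 0 := fun h => by
        rw [edgeSet_eq_empty_of_ncard_le_one' h]; exact Set.ncard_empty _
      have c1 := Set.ncard_union_add_ncard_inter K.edgeSet
        (({s(a, b), s(b, c), s(a, c)} : Set (Sym2 V)) ∩
          {e : Sym2 V | ∀ x ∈ e, x ∈ K.verts})
      rw [hFTS] at c1
      have c2 : (K.edgeSet ∪
            (({s(a, b), s(b, c), s(a, c)} : Set (Sym2 V)) ∩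
              {e : Sym2 V | ∀ x ∈ e, x ∈ K.verts})).ncard ≤
          (((K ⊔ T).induce (K.verts ∩ H₁.verts)).edgeSet ∪
            (K.induce (K.verts ∩ H₂.verts)).edgeSet).ncard :=
        Set.ncard_le_ncard hsubU (Set.toFinite _)
      have c3 := Set.ncard_union_add_ncard_inter
        ((K ⊔ T).induce (K.verts ∩ H₁.verts)).edgeSet
        (K.induce (K.verts ∩ H₂.verts)).edgeSet
      have c4 : (K.edgeSet ∩ ({s(a, b), s(b, c), s(a, c)} : Set (Sym2 V))).ncard ≤
          (((K ⊔ T).induce (K.verts ∩ H₁.verts)).edgeSet ∩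
            (K.induce (K.verts ∩ H₂.verts)).edgeSet).ncard :=
        Set.ncard_le_ncard hsubI (Set.toFinite _)
      have hp' : 2 * (K.verts ∩ ({a, b, c} : Set V)).ncard ≤
          (({s(a, b), s(b, c), s(a, c)} : Set (Sym2 V)) ∩
            {e : Sym2 V | ∀ x ∈ e, x ∈ K.verts}).ncard + 3 := by
        rcases Nat.lt_or_ge (K.verts ∩ ({a, b, c} : Set V)).ncard 2 with h | h
        · omega
        · rcases Nat.eq_or_lt_of_le h with h' | h'
          · have := hp1 h; omega
          · have h3 : (K.verts ∩ ({a, b, c} : Set V)).ncard = 3 := by omega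
            have := hp3 h3; omega
      rcases le_or_gt (K.verts ∩ H₁.verts).ncard 1 with h1 | h1 <;>
        rcases le_or_gt (K.verts ∩ H₂.verts).ncard 1 with h2 | h2
      · have := hE1 h1; have := hE2 h2; omega
      · have := hE1 h1; have := hL2 h2; omega
      · have := hL1 h1; have := hE2 h2; omega
      · have := hL1 h1; have := hL2 h2; omega
  · rw [SimpleGraph.Subgraph.verts_sup]
    omega
end

section
/- Let G₁ = (V₁, E₁) and G₂ = (V₂, E₂) be Laman graphs such that the graph H = (V₁ ∩ V₂, E₁ ∩ E₂) is itself a Laman graph which is a subgraph of both G₁ and G₂. Then the union graph G₁ ∪ G₂ = (V₁ ∪ V₂, E₁ ∪ E₂) is a Laman graph with |V₁| + |V₂| − |V₁ ∩ V₂| vertices. -/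
open SimpleGraph

section LamanAux

open SimpleGraph Subgraph

variable {V : Type*} [Finite V]

/-- Top-level reformulation of the Laman condition for a subgraph of `⊤`. -/
def LamanAt (M : (⊤ : SimpleGraph V).Subgraph) : Prop :=
  (M.edgeSet.ncard : ℤ) = 2 * (M.verts.ncard : ℤ) - 3 ∧
  ∀ N : (⊤ : SimpleGraph V).Subgraph, N ≤ M → 2 ≤ N.verts.ncard →
    (N.edgeSet.ncard : ℤ) ≤ 2 * (N.verts.ncard : ℤ) - 3

lemma ncard_edgeSet_coe (M : (⊤ : SimpleGraph V).Subgraph) :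
    M.coe.edgeSet.ncard = M.edgeSet.ncard := by
  rw [← image_coe_edgeSet_coe,
    Set.ncard_image_of_injective _ (Sym2.map.injective Subtype.val_injective)]

lemma restrict_verts_ncard {M N : (⊤ : SimpleGraph V).Subgraph} (h : N ≤ M) :
    (M.restrict N).verts.ncard = N.verts.ncard := by
  have hv : (M.restrict N).verts = (Subtype.val : M.verts → V) ⁻¹' N.verts := rfl
  rw [hv, ← Set.ncard_image_of_injective _ (Subtype.val_injective (p := (· ∈ M.verts))),
    Set.image_preimage_eq_iff.mpr]
  rw [Subtype.range_coe_subtype]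
  exact fun x hx => h.1 hx

lemma restrict_edgeSet_eq {M N : (⊤ : SimpleGraph V).Subgraph} (h : N ≤ M) :
    (M.restrict N).edgeSet = Sym2.map (Subtype.val : M.verts → V) ⁻¹' N.edgeSet := by
  ext e
  induction e using Sym2.ind with
  | _ a b =>
    simp only [Subgraph.mem_edgeSet, Sym2.map_pair_eq, Set.mem_preimage]
    exact ⟨fun h' => h'.2, fun h' => ⟨h.2 h', h'⟩⟩

lemma restrict_edgeSet_ncard {M N : (⊤ : SimpleGraph V).Subgraph} (h : N ≤ M) :
    (M.restrict N).edgeSet.ncard = N.edgeSet.ncard := by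
  rw [restrict_edgeSet_eq h,
    ← Set.ncard_image_of_injective _ (Sym2.map.injective
      (Subtype.val_injective (p := (· ∈ M.verts)))),
    Set.image_preimage_eq_iff.mpr]
  intro e he
  induction e using Sym2.ind with
  | _ a b =>
    have ha : a ∈ M.verts := h.1 (N.edge_vert he)
    have hb : b ∈ M.verts := h.1 (N.edge_vert (N.adj_symm he))
    exact ⟨s(⟨a, ha⟩, ⟨b, hb⟩), Sym2.map_pair_eq ..⟩

lemma isLaman_iff_lamanAt (M : (⊤ : SimpleGraph V).Subgraph) :
    IsLaman M.coe ↔ LamanAt M := by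
  have hcard : (Nat.card M.verts : ℤ) = (M.verts.ncard : ℤ) := by
    rw [Nat.card_coe_set_eq]
  constructor
  · rintro ⟨he, hsub⟩
    refine ⟨?_, fun N hN h2 => ?_⟩
    · rw [← ncard_edgeSet_coe, he, hcard]
    · have h2' : 2 ≤ (M.restrict N).verts.ncard := by rw [restrict_verts_ncard hN]; exact h2
      have := hsub (M.restrict N) h2'
      rwa [restrict_verts_ncard hN, restrict_edgeSet_ncard hN] at this
  · rintro ⟨he, hsub⟩
    refine ⟨?_, fun J h2 => ?_⟩
    · rw [ncard_edgeSet_coe, he, hcard]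
    · have hN : Subgraph.coeSubgraph J ≤ M := coeSubgraph_le J
      have hJ : M.restrict (Subgraph.coeSubgraph J) = J := restrict_coeSubgraph J
      have hv : J.verts.ncard = (Subgraph.coeSubgraph J).verts.ncard := by
        rw [← hJ, restrict_verts_ncard hN, hJ]
      have hev : J.edgeSet.ncard = (Subgraph.coeSubgraph J).edgeSet.ncard := by
        conv_lhs => rw [← hJ]
        rw [restrict_edgeSet_ncard hN]
      rw [hev, hv]
      exact hsub _ hN (by omega)

lemma two_le_verts_of_edge (N : (⊤ : SimpleGraph V).Subgraph) (hne : N.edgeSet.Nonempty) :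
    2 ≤ N.verts.ncard := by
  obtain ⟨e, he⟩ := hne
  induction e using Sym2.ind with
  | _ a b =>
    rw [Subgraph.mem_edgeSet] at he
    have hab : a ≠ b := (N.adj_sub he).ne
    have : 1 < N.verts.ncard :=
      (Set.one_lt_ncard (Set.toFinite _)).mpr
        ⟨a, N.edge_vert he, b, N.edge_vert (N.adj_symm he), hab⟩
    omega

lemma edge_ncard_zero_of_small (N : (⊤ : SimpleGraph V).Subgraph)
    (h : N.verts.ncard ≤ 1) : N.edgeSet.ncard = 0 := by
  have : N.edgeSet = ∅ := by
    by_contra h'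
    have := two_le_verts_of_edge N (Set.nonempty_iff_ne_empty.mpr h')
    omega
  simp [this]

lemma ie_edges (A B : (⊤ : SimpleGraph V).Subgraph) :
    (A ⊔ B).edgeSet.ncard + (A ⊓ B).edgeSet.ncard = A.edgeSet.ncard + B.edgeSet.ncard := by
  rw [Subgraph.edgeSet_sup, Subgraph.edgeSet_inf]
  exact Set.ncard_union_add_ncard_inter _ _ (Set.toFinite _) (Set.toFinite _)

lemma ie_verts (A B : (⊤ : SimpleGraph V).Subgraph) :
    (A ⊔ B).verts.ncard + (A ⊓ B).verts.ncard = A.verts.ncard + B.verts.ncard := by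
  rw [verts_sup, verts_inf]
  exact Set.ncard_union_add_ncard_inter _ _ (Set.toFinite _) (Set.toFinite _)

lemma lamanAt_sup (H₁ H₂ : (⊤ : SimpleGraph V).Subgraph)
    (h₁ : LamanAt H₁) (h₂ : LamanAt H₂) (hi : LamanAt (H₁ ⊓ H₂)) :
    LamanAt (H₁ ⊔ H₂) := by
  obtain ⟨he₁, hs₁⟩ := h₁
  obtain ⟨he₂, hs₂⟩ := h₂
  obtain ⟨hei, hsi⟩ := hi
  have hc2 : 2 ≤ (H₁ ⊓ H₂).verts.ncard := by omega
  constructor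
  · have ie := ie_edges H₁ H₂
    have iv := ie_verts H₁ H₂
    omega
  · intro K hK h2
    by_cases hw : 2 ≤ (K ⊓ (H₁ ⊓ H₂)).verts.ncard
    · -- large intersection case: enlarge K by H₁ ⊓ H₂
      have hAle : K ⊔ (H₁ ⊓ H₂) ≤ H₁ ⊔ H₂ :=
        sup_le hK (le_trans inf_le_left le_sup_left)
      have hAi : ((K ⊔ (H₁ ⊓ H₂)) ⊓ H₁) ⊓ ((K ⊔ (H₁ ⊓ H₂)) ⊓ H₂) = H₁ ⊓ H₂ := by
        rw [inf_inf_inf_comm, inf_idem, inf_eq_right]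
        exact le_sup_right
      have hAu : ((K ⊔ (H₁ ⊓ H₂)) ⊓ H₁) ⊔ ((K ⊔ (H₁ ⊓ H₂)) ⊓ H₂) = K ⊔ (H₁ ⊓ H₂) := by
        rw [← inf_sup_left, inf_eq_left]
        exact hAle
      have hsub1 : H₁ ⊓ H₂ ≤ (K ⊔ (H₁ ⊓ H₂)) ⊓ H₁ := le_inf le_sup_right inf_le_left
      have hsub2 : H₁ ⊓ H₂ ≤ (K ⊔ (H₁ ⊓ H₂)) ⊓ H₂ := le_inf le_sup_right inf_le_right
      have hv1 : (H₁ ⊓ H₂).verts.ncard ≤ ((K ⊔ (H₁ ⊓ H₂)) ⊓ H₁).verts.ncard :=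
        Set.ncard_le_ncard (verts_mono hsub1) (Set.toFinite _)
      have hv2 : (H₁ ⊓ H₂).verts.ncard ≤ ((K ⊔ (H₁ ⊓ H₂)) ⊓ H₂).verts.ncard :=
        Set.ncard_le_ncard (verts_mono hsub2) (Set.toFinite _)
      have b1 := hs₁ ((K ⊔ (H₁ ⊓ H₂)) ⊓ H₁) inf_le_right (by omega)
      have b2 := hs₂ ((K ⊔ (H₁ ⊓ H₂)) ⊓ H₂) inf_le_right (by omega)
      have bw := hsi (K ⊓ (H₁ ⊓ H₂)) inf_le_right hw
      have ie1 := ie_edges ((K ⊔ (H₁ ⊓ H₂)) ⊓ H₁) ((K ⊔ (H₁ ⊓ H₂)) ⊓ H₂)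
      rw [hAi, hAu] at ie1
      have iv1 := ie_verts ((K ⊔ (H₁ ⊓ H₂)) ⊓ H₁) ((K ⊔ (H₁ ⊓ H₂)) ⊓ H₂)
      rw [hAi, hAu] at iv1
      have ie2 := ie_edges K (H₁ ⊓ H₂)
      have iv2 := ie_verts K (H₁ ⊓ H₂)
      omega
    · -- small intersection case
      push_neg at hw
      have hw0 : (K ⊓ (H₁ ⊓ H₂)).edgeSet.ncard = 0 :=
        edge_ncard_zero_of_small _ (by omega)
      have hKu : (K ⊓ H₁) ⊔ (K ⊓ H₂) = K := by
        rw [← inf_sup_left, inf_eq_left]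
        exact hK
      have hKi : (K ⊓ H₁) ⊓ (K ⊓ H₂) = K ⊓ (H₁ ⊓ H₂) := by
        rw [inf_inf_inf_comm, inf_idem]
      have ie := ie_edges (K ⊓ H₁) (K ⊓ H₂)
      rw [hKu, hKi] at ie
      have iv := ie_verts (K ⊓ H₁) (K ⊓ H₂)
      rw [hKu, hKi] at iv
      have m1 : (K ⊓ H₁).verts.ncard ≤ K.verts.ncard :=
        Set.ncard_le_ncard (verts_mono inf_le_left) (Set.toFinite _)
      have m2 : (K ⊓ H₂).verts.ncard ≤ K.verts.ncard :=
        Set.ncard_le_ncard (verts_mono inf_le_left) (Set.toFinite _)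
      have hb1 : (K ⊓ H₁).edgeSet.ncard = 0 ∨
          ((K ⊓ H₁).edgeSet.ncard : ℤ) ≤ 2 * ((K ⊓ H₁).verts.ncard : ℤ) - 3 := by
        by_cases ha : 2 ≤ (K ⊓ H₁).verts.ncard
        · exact Or.inr (hs₁ _ inf_le_right ha)
        · exact Or.inl (edge_ncard_zero_of_small _ (by omega))
      have hb2 : (K ⊓ H₂).edgeSet.ncard = 0 ∨
          ((K ⊓ H₂).edgeSet.ncard : ℤ) ≤ 2 * ((K ⊓ H₂).verts.ncard : ℤ) - 3 := by
        by_cases ha : 2 ≤ (K ⊓ H₂).verts.ncard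
        · exact Or.inr (hs₂ _ inf_le_right ha)
        · exact Or.inl (edge_ncard_zero_of_small _ (by omega))
      rcases hb1 with hb1 | hb1 <;> rcases hb2 with hb2 | hb2 <;> omega

end LamanAux

/-- If two Laman graphs `G₁ = (V₁, E₁)` and `G₂ = (V₂, E₂)` intersect in a
graph `H = (V₁ ∩ V₂, E₁ ∩ E₂)` which is itself a Laman graph (a subgraph of both), then
their union is a Laman graph with `|V₁| + |V₂| - |V₁ ∩ V₂|` vertices. -/
theorem laman_glue_laman_subgraph {V : Type*} [Finite V]
    (H₁ H₂ : (⊤ : SimpleGraph V).Subgraph)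
    (h₁ : IsLaman H₁.coe) (h₂ : IsLaman H₂.coe)
    (hinter : IsLaman (H₁ ⊓ H₂).coe) :
    IsLaman (H₁ ⊔ H₂).coe ∧
      (H₁ ⊔ H₂).verts.ncard =
        H₁.verts.ncard + H₂.verts.ncard - (H₁ ⊓ H₂).verts.ncard := by
  rw [isLaman_iff_lamanAt] at h₁ h₂ hinter ⊢
  refine ⟨lamanAt_sup H₁ H₂ h₁ h₂ hinter, ?_⟩
  have iv := ie_verts H₁ H₂
  have m : (H₁ ⊓ H₂).verts.ncard ≤ H₁.verts.ncard :=
    Set.ncard_le_ncard (SimpleGraph.Subgraph.verts_mono inf_le_left) (Set.toFinite _)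
  omega
end

section
/- The graph on four vertices {1,2,3,4} with edge set {{1,2},{1,3},{2,3},{2,4},{3,4}} (the complete graph K₄ minus one edge) is a Laman graph and has Laman number 4; that is, there is a dense open subset U ⊆ ℂ⁵ of labelings such that for every λ ∈ U there are exactly 4 equivalence classes of compatible realizations. -/
open SimpleGraph

/-- The complete graph on four vertices minus one edge: vertices `{0, 1, 2, 3}` and edges
`{0,1}, {0,2}, {1,2}, {1,3}, {2,3}` (relabeling of `{1,2,3,4}` from the statement). -/
def K4minus : SimpleGraph (Fin 4) :=
  SimpleGraph.fromEdgeSet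
    ({s(0, 1), s(0, 2), s(1, 2), s(1, 3), s(2, 3)} : Set (Sym2 (Fin 4)))

def EF : Finset (Sym2 (Fin 4)) := {s(0,1), s(0,2), s(1,2), s(1,3), s(2,3)}
lemma edgeSet_eq : K4minus.edgeSet = ↑EF := by
  rw [K4minus, edgeSet_fromEdgeSet]
  ext e
  induction e using Sym2.ind with
  | _ u v =>
    simp only [Set.mem_diff, Set.mem_insert_iff, Set.mem_singleton_iff, Set.mem_setOf_eq,
      Finset.coe_insert, Finset.mem_coe, EF, Finset.mem_insert, Finset.mem_singleton]
    revert u v; decide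
lemma adj_iff (u v : Fin 4) : K4minus.Adj u v ↔ s(u,v) ∈ EF := by
  rw [← SimpleGraph.mem_edgeSet, edgeSet_eq, Finset.mem_coe]
instance : DecidableRel K4minus.Adj := fun u v => decidable_of_iff _ (adj_iff u v).symm


noncomputable def Lf (lam : K4minus.edgeSet → ℂ) : Sym2 (Fin 4) → ℂ :=
  fun e => if h : e ∈ K4minus.edgeSet then lam ⟨e, h⟩ else 0

lemma Lf_apply (lam : K4minus.edgeSet → ℂ) (e : K4minus.edgeSet) : lam e = Lf lam ↑e := by
  simp [Lf, e.2]

lemma compatible_iff (lam : K4minus.edgeSet → ℂ) (ρ : Fin 4 → Fin 2 → ℂ) :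
    Compatible K4minus lam ρ ↔
      ((ρ 0 0 - ρ 1 0) ^ 2 + (ρ 0 1 - ρ 1 1) ^ 2 = Lf lam s(0,1) ∧
       (ρ 0 0 - ρ 2 0) ^ 2 + (ρ 0 1 - ρ 2 1) ^ 2 = Lf lam s(0,2) ∧
       (ρ 1 0 - ρ 2 0) ^ 2 + (ρ 1 1 - ρ 2 1) ^ 2 = Lf lam s(1,2) ∧
       (ρ 1 0 - ρ 3 0) ^ 2 + (ρ 1 1 - ρ 3 1) ^ 2 = Lf lam s(1,3) ∧
       (ρ 2 0 - ρ 3 0) ^ 2 + (ρ 2 1 - ρ 3 1) ^ 2 = Lf lam s(2,3)) := by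
  constructor
  · intro h
    exact ⟨by rw [h 0 1 (by decide)]; exact Lf_apply lam _,
           by rw [h 0 2 (by decide)]; exact Lf_apply lam _,
           by rw [h 1 2 (by decide)]; exact Lf_apply lam _,
           by rw [h 1 3 (by decide)]; exact Lf_apply lam _,
           by rw [h 2 3 (by decide)]; exact Lf_apply lam _⟩
  · rintro ⟨h1, h2, h3, h4, h5⟩ u v h
    rw [Lf_apply lam]
    fin_cases u <;> fin_cases v <;>
      simp only [Fin.mk_zero, Fin.mk_one, Fin.reduceFinMk, Fin.isValue] at h ⊢ <;>
      first
        | exact absurd h (by decide)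
        | (first
             | linear_combination h1 | linear_combination h2 | linear_combination h3
             | linear_combination h4 | linear_combination h5
             | (rw [Sym2.eq_swap]
                first
                  | linear_combination h1 | linear_combination h2 | linear_combination h3
                  | linear_combination h4 | linear_combination h5))


-- cross product of differences: invariant under EquivRealization
def cr (ρ : Fin 4 → Fin 2 → ℂ) (w : Fin 4) : ℂ :=
  (ρ w 0 - ρ 1 0) * (ρ 2 1 - ρ 1 1) - (ρ w 1 - ρ 1 1) * (ρ 2 0 - ρ 1 0)

lemma mulVec_apply (A : Matrix (Fin 2) (Fin 2) ℂ) (x : Fin 2 → ℂ) (i : Fin 2) :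
    A.mulVec x i = A i 0 * x 0 + A i 1 * x 1 := by
  simp [Matrix.mulVec, dotProduct, Fin.sum_univ_two]

lemma cr_invariant {ρ ρ' : Fin 4 → Fin 2 → ℂ} (h : EquivRealization ρ ρ') (w : Fin 4) :
    cr ρ' w = cr ρ w := by
  obtain ⟨A, b, hA, hdet, hv⟩ := h
  rw [Matrix.det_fin_two] at hdet
  simp only [cr, hv, Pi.add_apply, mulVec_apply]
  linear_combination ((ρ w 0 - ρ 1 0) * (ρ 2 1 - ρ 1 1) - (ρ w 1 - ρ 1 1) * (ρ 2 0 - ρ 1 0)) * hdet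

lemma entries_of_orth {A : Matrix (Fin 2) (Fin 2) ℂ} (hA : A.transpose * A = 1) :
    A 0 0 ^ 2 + A 1 0 ^ 2 = 1 ∧ A 0 0 * A 0 1 + A 1 0 * A 1 1 = 0 ∧
      A 0 1 ^ 2 + A 1 1 ^ 2 = 1 := by
  have h00 := congrFun (congrFun hA 0) 0
  have h01 := congrFun (congrFun hA 0) 1
  have h11 := congrFun (congrFun hA 1) 1
  simp [Matrix.mul_apply, Fin.sum_univ_two, Matrix.transpose_apply, Matrix.one_apply] at h00 h01 h11
  exact ⟨by linear_combination h00, by linear_combination h01, by linear_combination h11⟩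

lemma q_invariant {A : Matrix (Fin 2) (Fin 2) ℂ} (hA : A.transpose * A = 1) (x : Fin 2 → ℂ) :
    (A.mulVec x 0) ^ 2 + (A.mulVec x 1) ^ 2 = x 0 ^ 2 + x 1 ^ 2 := by
  obtain ⟨e1, e2, e3⟩ := entries_of_orth hA
  simp only [mulVec_apply]
  linear_combination (x 0)^2 * e1 + 2 * x 0 * x 1 * e2 + (x 1)^2 * e3

lemma compatible_equiv {lam : K4minus.edgeSet → ℂ} {ρ ρ' : Fin 4 → Fin 2 → ℂ}
    (hc : Compatible K4minus lam ρ) (h : EquivRealization ρ ρ') :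
    Compatible K4minus lam ρ' := by
  obtain ⟨A, b, hA, hdet, hv⟩ := h
  intro u v hadj
  have := q_invariant hA (fun i => ρ u i - ρ v i)
  simp only [hv, Pi.add_apply]
  have hm : ∀ i, A.mulVec (ρ u) i + b i - (A.mulVec (ρ v) i + b i)
      = A.mulVec (fun j => ρ u j - ρ v j) i := by
    intro i; simp only [mulVec_apply]; ring
  rw [hm 0, hm 1, this]
  exact hc u v hadj

def rl (z x0 y0 x3 y3 : ℂ) : Fin 4 → Fin 2 → ℂ := ![![x0, y0], ![0,0], ![z,0], ![x3,y3]]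

section main
variable (lam : K4minus.edgeSet → ℂ) {z x0 y0 x3 y3 : ℂ}

lemma compat_rl (hz : z^2 = Lf lam s(1,2))
    (hx0 : x0 * (2*z) = Lf lam s(0,1) - Lf lam s(0,2) + Lf lam s(1,2))
    (hy0 : y0^2 = Lf lam s(0,1) - x0^2)
    (hx3 : x3 * (2*z) = Lf lam s(1,3) - Lf lam s(2,3) + Lf lam s(1,2))
    (hy3 : y3^2 = Lf lam s(1,3) - x3^2)
    {e0 e3 : ℂ} (he0 : e0^2 = 1) (he3 : e3^2 = 1) :
    Compatible K4minus lam (rl z x0 (e0*y0) x3 (e3*y3)) := by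
  rw [compatible_iff]
  simp only [rl, Matrix.cons_val_zero, Matrix.cons_val_one, Matrix.head_cons,
    Matrix.cons_val_two, Matrix.tail_cons, Matrix.cons_val_three]
  refine ⟨?_, ?_, ?_, ?_, ?_⟩
  · linear_combination hy0 + (y0^2) * he0
  · linear_combination hy0 + (y0^2) * he0 + hz - hx0
  · linear_combination hz
  · linear_combination hy3 + (y3^2) * he3
  · linear_combination hy3 + (y3^2) * he3 + hz - hx3

lemma cr_rl {e0 e3 : ℂ} :
    cr (rl z x0 (e0*y0) x3 (e3*y3)) 0 = -(e0*y0)*z ∧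
    cr (rl z x0 (e0*y0) x3 (e3*y3)) 3 = -(e3*y3)*z := by
  constructor <;>
  · simp only [cr, rl, Matrix.cons_val_zero, Matrix.cons_val_one, Matrix.head_cons,
      Matrix.cons_val_two, Matrix.tail_cons, Matrix.cons_val_three]
    ring

end main

section norm
variable {lam : K4minus.edgeSet → ℂ} {z x0 y0 x3 y3 : ℂ}

lemma normalizeK4 (hz : z^2 = Lf lam s(1,2)) (hzne : z ≠ 0)
    (hx0 : x0 * (2*z) = Lf lam s(0,1) - Lf lam s(0,2) + Lf lam s(1,2))
    (hy0 : y0^2 = Lf lam s(0,1) - x0^2)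
    (hx3 : x3 * (2*z) = Lf lam s(1,3) - Lf lam s(2,3) + Lf lam s(1,2))
    (hy3 : y3^2 = Lf lam s(1,3) - x3^2)
    {ρ : Fin 4 → Fin 2 → ℂ} (hρ : Compatible K4minus lam ρ) :
    ∃ e0 e3 : ℂ, e0^2 = 1 ∧ e3^2 = 1 ∧
      EquivRealization ρ (rl z x0 (e0*y0) x3 (e3*y3)) := by
  obtain ⟨h1, h2, h3, h4, h5⟩ := (compatible_iff lam ρ).mp hρ
  set v0 : ℂ := ρ 2 0 - ρ 1 0 with hv0
  set v1 : ℂ := ρ 2 1 - ρ 1 1 with hv1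
  have hc : v0^2 + v1^2 = Lf lam s(1,2) := by rw [hv0, hv1]; linear_combination h3
  have hc' : (ρ 2 0 - ρ 1 0)^2 + (ρ 2 1 - ρ 1 1)^2 = Lf lam s(1,2) := by linear_combination h3
  set A : Matrix (Fin 2) (Fin 2) ℂ := !![v0/z, v1/z; -v1/z, v0/z] with hAdef
  have hA00 : A 0 0 = v0/z := rfl
  have hA01 : A 0 1 = v1/z := rfl
  have hA10 : A 1 0 = -v1/z := rfl
  have hA11 : A 1 1 = v0/z := rfl
  set b : Fin 2 → ℂ := fun i => -(A.mulVec (ρ 1) i) with hbdef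
  have hA : A.transpose * A = 1 := by
    ext i j
    fin_cases i <;> fin_cases j <;>
      simp only [Matrix.mul_apply, Fin.sum_univ_two, Matrix.transpose_apply,
        Matrix.one_apply, hAdef, Matrix.cons_val', Matrix.cons_val_zero, Matrix.cons_val_one,
        Matrix.head_cons, Matrix.empty_val', Matrix.cons_val_fin_one, Matrix.head_fin_const,
        Fin.mk_zero, Fin.mk_one, Fin.isValue, Matrix.of_apply] <;>
      norm_num <;> field_simp <;>
      first | (first | linear_combination hc' - hz | linear_combination hz - hc') | ring
  have hdet : A.det = 1 := by
    rw [Matrix.det_fin_two]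
    simp only [hAdef, Matrix.cons_val', Matrix.cons_val_zero, Matrix.cons_val_one,
      Matrix.head_cons, Matrix.empty_val', Matrix.cons_val_fin_one, Matrix.head_fin_const,
      Matrix.of_apply]
    field_simp
    first | linear_combination hc' - hz | linear_combination hz - hc'
  set ρ' : Fin 4 → Fin 2 → ℂ := fun w => A.mulVec (ρ w) + b with hρ'def
  have hE' : EquivRealization ρ ρ' := ⟨A, b, hA, hdet, fun _ => rfl⟩
  have hcomp' : Compatible K4minus lam ρ' := compatible_equiv hρ hE'
  have hρ'1 : ∀ i, ρ' 1 i = 0 := by intro i; fin_cases i <;> simp [hρ'def, hbdef, Matrix.vecHead, Matrix.vecTail]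
  have hρ'20 : ρ' 2 0 = z := by
    simp only [hρ'def, hbdef, Pi.add_apply, mulVec_apply, hA00, hA01]
    field_simp
    first | linear_combination hc' - hz | linear_combination hz - hc' | linear_combination z*hc' - z*hz | linear_combination z*hz - z*hc'
  have hρ'21 : ρ' 2 1 = 0 := by
    simp only [hρ'def, hbdef, Pi.add_apply, mulVec_apply, hA10, hA11]
    field_simp
    ring
  obtain ⟨h1', h2', h3', h4', h5'⟩ := (compatible_iff lam ρ').mp hcomp'
  rw [hρ'1 0, hρ'1 1] at h1' h4'
  rw [hρ'20, hρ'21] at h2' h5'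
  -- h1' : (ρ' 0 0 - 0)^2 + (ρ' 0 1 - 0)^2 = a ; h2' : (ρ' 0 0 - z)^2 + (ρ' 0 1 - 0)^2 = b
  set p := ρ' 0 0
  set q := ρ' 0 1
  set p3 := ρ' 3 0
  set q3 := ρ' 3 1
  have h2zne : (2:ℂ)*z ≠ 0 := by simpa using hzne
  have hp : p = x0 := by
    have hp' : p * (2*z) = x0 * (2*z) := by rw [hx0]; linear_combination h1' - h2' + hz
    exact mul_right_cancel₀ h2zne hp'
  have hq : (q - y0) * (q + y0) = 0 := by
    linear_combination h1' - hy0 - (p + x0) * hp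
  have hp3 : p3 = x3 := by
    have hp3' : p3 * (2*z) = x3 * (2*z) := by rw [hx3]; linear_combination h4' - h5' + hz
    exact mul_right_cancel₀ h2zne hp3'
  have hq3 : (q3 - y3) * (q3 + y3) = 0 := by
    linear_combination h4' - hy3 - (p3 + x3) * hp3
  have key : ∀ e0 e3 : ℂ, q = e0 * y0 → q3 = e3 * y3 → EquivRealization ρ (rl z x0 (e0*y0) x3 (e3*y3)) := by
    intro e0 e3 hqe hq3e
    refine ⟨A, b, hA, hdet, fun w => ?_⟩
    have : rl z x0 (e0*y0) x3 (e3*y3) w = ρ' w := by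
      fin_cases w <;> funext i <;> fin_cases i <;>
        simp only [rl, Matrix.cons_val_zero, Matrix.cons_val_one, Matrix.head_cons,
          Matrix.cons_val_two, Matrix.tail_cons, Matrix.cons_val_three,
          Fin.mk_zero, Fin.mk_one, Fin.reduceFinMk, Fin.isValue]
      · exact hp.symm
      · exact hqe ▸ rfl
      · exact (hρ'1 0).symm
      · exact (hρ'1 1).symm
      · exact hρ'20.symm
      · exact hρ'21.symm
      · exact hp3.symm
      · exact hq3e ▸ rfl
    rw [this]
  rcases mul_eq_zero.mp hq with hq' | hq' <;> rcases mul_eq_zero.mp hq3 with hq3' | hq3'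
  · exact ⟨1, 1, by norm_num, by norm_num, key 1 1 (by linear_combination hq') (by linear_combination hq3')⟩
  · exact ⟨1, -1, by norm_num, by norm_num, key 1 (-1) (by linear_combination hq') (by linear_combination hq3')⟩
  · exact ⟨-1, 1, by norm_num, by norm_num, key (-1) 1 (by linear_combination hq') (by linear_combination hq3')⟩
  · exact ⟨-1, -1, by norm_num, by norm_num, key (-1) (-1) (by linear_combination hq') (by linear_combination hq3')⟩

end norm

section count
variable {lam : K4minus.edgeSet → ℂ}

lemma card_classes (hcne : Lf lam s(1,2) ≠ 0)
    (hD0 : (Lf lam s(0,1) - Lf lam s(0,2) + Lf lam s(1,2))^2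
        - 4 * Lf lam s(0,1) * Lf lam s(1,2) ≠ 0)
    (hD3 : (Lf lam s(1,3) - Lf lam s(2,3) + Lf lam s(1,2))^2
        - 4 * Lf lam s(1,3) * Lf lam s(1,2) ≠ 0) :
    Nat.card (RealizationClasses K4minus lam) = 4 := by
  classical
  obtain ⟨z, hz⟩ : ∃ z : ℂ, z ^ 2 = Lf lam s(1,2) :=
    IsAlgClosed.exists_pow_nat_eq _ (by norm_num)
  have hzne : z ≠ 0 := by
    intro h; apply hcne; rw [← hz, h]; ring
  have h2zne : (2:ℂ) * z ≠ 0 := by simpa using hzne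
  set x0 : ℂ := (Lf lam s(0,1) - Lf lam s(0,2) + Lf lam s(1,2)) / (2*z) with hx0def
  have hx0 : x0 * (2*z) = Lf lam s(0,1) - Lf lam s(0,2) + Lf lam s(1,2) :=
    div_mul_cancel₀ _ h2zne
  obtain ⟨y0, hy0⟩ : ∃ y0 : ℂ, y0 ^ 2 = Lf lam s(0,1) - x0^2 :=
    IsAlgClosed.exists_pow_nat_eq _ (by norm_num)
  have hy0ne : y0 ≠ 0 := by
    intro h0
    apply hD0
    have hh : (0:ℂ) = Lf lam s(0,1) - x0^2 := by rw [← hy0, h0]; ring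
    linear_combination (-(x0*(2*z) + (Lf lam s(0,1) - Lf lam s(0,2) + Lf lam s(1,2)))) * hx0
      + 4*x0^2*hz + 4*(Lf lam s(1,2))*hh
  set x3 : ℂ := (Lf lam s(1,3) - Lf lam s(2,3) + Lf lam s(1,2)) / (2*z) with hx3def
  have hx3 : x3 * (2*z) = Lf lam s(1,3) - Lf lam s(2,3) + Lf lam s(1,2) :=
    div_mul_cancel₀ _ h2zne
  obtain ⟨y3, hy3⟩ : ∃ y3 : ℂ, y3 ^ 2 = Lf lam s(1,3) - x3^2 :=
    IsAlgClosed.exists_pow_nat_eq _ (by norm_num)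
  have hy3ne : y3 ≠ 0 := by
    intro h0
    apply hD3
    have hh : (0:ℂ) = Lf lam s(1,3) - x3^2 := by rw [← hy3, h0]; ring
    linear_combination (-(x3*(2*z) + (Lf lam s(1,3) - Lf lam s(2,3) + Lf lam s(1,2)))) * hx3
      + 4*x3^2*hz + 4*(Lf lam s(1,2))*hh
  -- signed realizations
  set sg : Bool → ℂ := fun s => if s then 1 else -1 with hsg
  have hsg2 : ∀ s, (sg s)^2 = 1 := by intro s; cases s <;> simp [hsg]
  set R : Bool → Bool → (Fin 4 → Fin 2 → ℂ) :=
    fun s t => rl z x0 (sg s * y0) x3 (sg t * y3) with hR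
  have hRcomp : ∀ s t, Compatible K4minus lam (R s t) := fun s t =>
    compat_rl lam hz hx0 hy0 hx3 hy3 (hsg2 s) (hsg2 t)
  have hcr0 : ∀ s t, cr (R s t) 0 = -(sg s * y0) * z := fun s t => (cr_rl).1
  have hcr3 : ∀ s t, cr (R s t) 3 = -(sg t * y3) * z := fun s t => (cr_rl).2
  have hyz0 : y0 * z ≠ 0 := mul_ne_zero hy0ne hzne
  have hyz3 : y3 * z ≠ 0 := mul_ne_zero hy3ne hzne
  -- the invariant map
  set f : { ρ : Fin 4 → Fin 2 → ℂ // Compatible K4minus lam ρ } → Bool × Bool :=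
    fun ρp => ((if cr ρp.1 0 = -(y0 * z) then true else false),
               (if cr ρp.1 3 = -(y3 * z) then true else false)) with hfdef
  have hsgT : sg true = 1 := by simp [hsg]
  have hsgF : sg false = -1 := by simp [hsg]
  have hcond0T : (-(sg true * y0) * z = -(y0 * z)) := by rw [hsgT]; ring
  have hcond3T : (-(sg true * y3) * z = -(y3 * z)) := by rw [hsgT]; ring
  have hcond0F : ¬(-(sg false * y0) * z = -(y0 * z)) := by
    rw [hsgF]; intro h; exact hyz0 (by linear_combination h/2)
  have hcond3F : ¬(-(sg false * y3) * z = -(y3 * z)) := by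
    rw [hsgF]; intro h; exact hyz3 (by linear_combination h/2)
  have hfR : ∀ s t, f ⟨R s t, hRcomp s t⟩ = (s, t) := by
    intro s t
    simp only [hfdef]
    rw [hcr0, hcr3]
    cases s <;> cases t
    · rw [if_neg hcond0F, if_neg hcond3F]
    · rw [if_neg hcond0F, if_pos hcond3T]
    · rw [if_pos hcond0T, if_neg hcond3F]
    · rw [if_pos hcond0T, if_pos hcond3T]
  have hfinv : ∀ (ρp ρp' : { ρ : Fin 4 → Fin 2 → ℂ // Compatible K4minus lam ρ }),
      EquivRealization ρp.1 ρp'.1 → f ρp = f ρp' := by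
    intro ρp ρp' hE
    simp only [hfdef, cr_invariant hE 0, cr_invariant hE 3]
  set F : RealizationClasses K4minus lam → Bool × Bool := Quot.lift f hfinv with hF
  set g : Bool × Bool → RealizationClasses K4minus lam :=
    fun st => Quot.mk _ ⟨R st.1 st.2, hRcomp st.1 st.2⟩ with hg
  have hright : ∀ st, F (g st) = st := by
    rintro ⟨s, t⟩
    show f ⟨R s t, hRcomp s t⟩ = (s, t)
    exact hfR s t
  have hleft : ∀ q, g (F q) = q := by
    apply Quot.ind
    intro ρp
    obtain ⟨e0, e3, he0, he3, hE⟩ :=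
      normalizeK4 hz hzne hx0 hy0 hx3 hy3 ρp.2
    have he0' : (e0 - 1) * (e0 + 1) = 0 := by linear_combination he0
    have he3' : (e3 - 1) * (e3 + 1) = 0 := by linear_combination he3
    have key : ∀ s t : Bool, e0 = sg s → e3 = sg t → g (F (Quot.mk _ ρp)) = Quot.mk _ ρp := by
      intro s t hs ht
      have hE' : EquivRealization ρp.1 (R s t) := by
        show EquivRealization ρp.1 (rl z x0 (sg s * y0) x3 (sg t * y3))
        rw [← hs, ← ht]; exact hE
      have hmk : Quot.mk _ ρp = g (s, t) := Quot.sound hE'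
      have hFq : F (Quot.mk _ ρp) = (s, t) := by
        show f ρp = (s, t)
        rw [hfinv ρp ⟨R s t, hRcomp s t⟩ hE']
        exact hfR s t
      rw [hFq, ← hmk]
    rcases mul_eq_zero.mp he0' with h0 | h0 <;> rcases mul_eq_zero.mp he3' with h3 | h3
    · exact key true true (by rw [hsgT]; linear_combination h0) (by rw [hsgT]; linear_combination h3)
    · exact key true false (by rw [hsgT]; linear_combination h0) (by rw [hsgF]; linear_combination h3)
    · exact key false true (by rw [hsgF]; linear_combination h0) (by rw [hsgT]; linear_combination h3)
    · exact key false false (by rw [hsgF]; linear_combination h0) (by rw [hsgF]; linear_combination h3)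
  have hequiv : RealizationClasses K4minus lam ≃ Bool × Bool :=
    ⟨F, g, hleft, hright⟩
  rw [Nat.card_congr hequiv]
  simp [Nat.card_eq_fintype_card]

end count

section topo

lemma quad_finite (b c : ℂ) : {t : ℂ | (t - b + c)^2 - 4*t*c = 0}.Finite := by
  have hp : (Polynomial.X^2 + Polynomial.C (-2*b - 2*c) * Polynomial.X
      + Polynomial.C ((c-b)^2) : Polynomial ℂ) ≠ 0 := by
    intro h
    have h2 := congrArg (fun p => Polynomial.coeff p 2) h
    simp only [Polynomial.coeff_add, Polynomial.coeff_C_mul, Polynomial.coeff_X,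
      Polynomial.coeff_X_pow, Polynomial.coeff_C, Polynomial.coeff_zero] at h2
    norm_num at h2
  apply Set.Finite.subset (Polynomial.finite_setOf_isRoot hp)
  intro t ht
  simp only [Set.mem_setOf_eq, Polynomial.IsRoot, Polynomial.eval_add, Polynomial.eval_mul,
    Polynomial.eval_pow, Polynomial.eval_X, Polynomial.eval_C]
  simp only [Set.mem_setOf_eq] at ht
  linear_combination ht

lemma dense_aux (e0 : K4minus.edgeSet) (P : (K4minus.edgeSet → ℂ) → ℂ)
    (hP : ∀ lam : K4minus.edgeSet → ℂ,
      {t : ℂ | P (Function.update lam e0 t) = 0}.Finite) :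
    Dense {lam : K4minus.edgeSet → ℂ | P lam ≠ 0} := by
  classical
  intro lam
  have hfin := hP lam
  have hd : Dense {t : ℂ | P (Function.update lam e0 t) = 0}ᶜ :=
    hfin.countable.dense_compl ℂ
  have hcont : Continuous (fun t : ℂ => Function.update lam e0 t) := by
    apply continuous_pi
    intro e
    by_cases he : e = e0
    · subst he
      simpa [Function.update_self] using (continuous_id' : Continuous (fun t : ℂ => t))
    · simpa [Function.update_of_ne he] using continuous_const (y := lam e)
  have hmap : Set.MapsTo (fun t : ℂ => Function.update lam e0 t)
      {t : ℂ | P (Function.update lam e0 t) = 0}ᶜ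
      {lam' : K4minus.edgeSet → ℂ | P lam' ≠ 0} := fun t ht => ht
  have heq : lam = Function.update lam e0 (lam e0) := (Function.update_eq_self _ _).symm
  rw [heq]
  exact map_mem_closure hcont (hd (lam e0)) hmap

lemma open_aux (P : (K4minus.edgeSet → ℂ) → ℂ) (hP : Continuous P) :
    IsOpen {lam : K4minus.edgeSet → ℂ | P lam ≠ 0} :=
  isOpen_compl_singleton.preimage hP

end topo

def E01 : K4minus.edgeSet := ⟨s(0,1), by rw [edgeSet_eq]; exact Finset.mem_coe.mpr (by decide)⟩
def E02 : K4minus.edgeSet := ⟨s(0,2), by rw [edgeSet_eq]; exact Finset.mem_coe.mpr (by decide)⟩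
def E12 : K4minus.edgeSet := ⟨s(1,2), by rw [edgeSet_eq]; exact Finset.mem_coe.mpr (by decide)⟩
def E13 : K4minus.edgeSet := ⟨s(1,3), by rw [edgeSet_eq]; exact Finset.mem_coe.mpr (by decide)⟩
def E23 : K4minus.edgeSet := ⟨s(2,3), by rw [edgeSet_eq]; exact Finset.mem_coe.mpr (by decide)⟩

lemma Lf01 (lam : K4minus.edgeSet → ℂ) : Lf lam s(0,1) = lam E01 := (Lf_apply lam E01).symm
lemma Lf02 (lam : K4minus.edgeSet → ℂ) : Lf lam s(0,2) = lam E02 := (Lf_apply lam E02).symm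
lemma Lf12 (lam : K4minus.edgeSet → ℂ) : Lf lam s(1,2) = lam E12 := (Lf_apply lam E12).symm
lemma Lf13 (lam : K4minus.edgeSet → ℂ) : Lf lam s(1,3) = lam E13 := (Lf_apply lam E13).symm
lemma Lf23 (lam : K4minus.edgeSet → ℂ) : Lf lam s(2,3) = lam E23 := (Lf_apply lam E23).symm

lemma filter_card_bound : ∀ s : Finset (Fin 4),
    (EF.filter (fun e => ∀ v ∈ e, v ∈ s)).card ≤ 2 * s.card - 3 := by decide

lemma subgraph_bound (H : K4minus.Subgraph) (h2 : 2 ≤ H.verts.ncard) :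
    (H.edgeSet.ncard : ℤ) ≤ 2 * (H.verts.ncard : ℤ) - 3 := by
  classical
  have hfin : H.verts.Finite := Set.toFinite _
  set s : Finset (Fin 4) := hfin.toFinset with hs
  have hvc : H.verts.ncard = s.card := by
    rw [hs, Set.ncard_eq_toFinset_card]
  have hsub : H.edgeSet ⊆ ↑(EF.filter (fun e => ∀ v ∈ e, v ∈ s)) := by
    intro e he
    induction e using Sym2.ind with
    | _ u v =>
      have hadj : H.Adj u v := (H.mem_edgeSet).mp he
      simp only [Finset.coe_filter, Set.mem_setOf_eq]
      refine ⟨(adj_iff u v).mp (H.adj_sub hadj), ?_⟩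
      intro w hw
      rw [Sym2.mem_iff] at hw
      rcases hw with rfl | rfl
      · simpa [hs] using H.edge_vert hadj
      · simpa [hs] using H.edge_vert hadj.symm
  have hle : H.edgeSet.ncard ≤ (EF.filter (fun e => ∀ v ∈ e, v ∈ s)).card := by
    rw [← Set.ncard_coe_finset]
    exact Set.ncard_le_ncard hsub (Set.toFinite _)
  have := filter_card_bound s
  have h2' : 2 ≤ s.card := by rw [← hvc]; exact h2
  rw [hvc]
  omega


theorem k4_minus_edge_laman_number_four :
    IsLaman K4minus ∧ HasLamanNumber K4minus 4 := by
  classical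
  constructor
  · constructor
    · rw [edgeSet_eq, Set.ncard_coe_finset]
      norm_num
      decide
    · exact subgraph_bound
  · refine ⟨{lam | lam E12 ≠ 0}
        ∩ {lam | (lam E01 - lam E02 + lam E12)^2 - 4 * lam E01 * lam E12 ≠ 0}
        ∩ {lam | (lam E13 - lam E23 + lam E12)^2 - 4 * lam E13 * lam E12 ≠ 0},
      ?_, ?_, ?_⟩
    · refine IsOpen.inter (IsOpen.inter ?_ ?_) ?_
      · exact open_aux _ (by fun_prop)
      · exact open_aux _ (by fun_prop)
      · exact open_aux _ (by fun_prop)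
    · have hd1 : Dense {lam : K4minus.edgeSet → ℂ | lam E12 ≠ 0} := by
        apply dense_aux E12 (fun lam => lam E12)
        intro lam
        apply Set.Finite.subset (Set.finite_singleton 0)
        intro t ht
        simpa [Function.update_self] using ht
      have hd2 : Dense {lam : K4minus.edgeSet → ℂ |
          (lam E01 - lam E02 + lam E12)^2 - 4 * lam E01 * lam E12 ≠ 0} := by
        apply dense_aux E01 (fun lam => (lam E01 - lam E02 + lam E12)^2 - 4 * lam E01 * lam E12)
        intro lam
        have hne1 : E02 ≠ E01 := by intro h; exact absurd (congrArg Subtype.val h) (by decide)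
        have hne2 : E12 ≠ E01 := by intro h; exact absurd (congrArg Subtype.val h) (by decide)
        apply Set.Finite.subset (quad_finite (lam E02) (lam E12))
        intro t ht
        simp only [Set.mem_setOf_eq, Function.update_self, Function.update_of_ne hne1,
          Function.update_of_ne hne2] at ht ⊢
        exact ht
      have hd3 : Dense {lam : K4minus.edgeSet → ℂ |
          (lam E13 - lam E23 + lam E12)^2 - 4 * lam E13 * lam E12 ≠ 0} := by
        apply dense_aux E13 (fun lam => (lam E13 - lam E23 + lam E12)^2 - 4 * lam E13 * lam E12)
        intro lam
        have hne1 : E23 ≠ E13 := by intro h; exact absurd (congrArg Subtype.val h) (by decide)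
        have hne2 : E12 ≠ E13 := by intro h; exact absurd (congrArg Subtype.val h) (by decide)
        apply Set.Finite.subset (quad_finite (lam E23) (lam E12))
        intro t ht
        simp only [Set.mem_setOf_eq, Function.update_self, Function.update_of_ne hne1,
          Function.update_of_ne hne2] at ht ⊢
        exact ht
      exact Dense.inter_of_isOpen_left
        (Dense.inter_of_isOpen_left hd1 hd2 (open_aux _ (by fun_prop)))
        hd3 (IsOpen.inter (open_aux _ (by fun_prop)) (open_aux _ (by fun_prop)))
    · rintro lam ⟨⟨h1, h2⟩, h3⟩
      apply card_classes
      · rw [Lf12]; exact h1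
      · rw [Lf01, Lf02, Lf12]; exact h2
      · rw [Lf13, Lf23, Lf12]; exact h3
end
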